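/- arXiv:1301.0542 — 7 statements merged into one kernel-verified Lean document; each statement's English description precedes it below -/
import Mathlib

section
/- If x* is the unique minimizer of min ||x||_1 subject to Ax = b, then the null space of A and the null space of B intersect trivially, where B is the r×n matrix selecting the zero components of x*. -/
open Finset

/-- If `x*` is the unique minimizer of `min ‖x‖₁ s.t. Ax = b` (A full row rank),
then the null space of `A` intersects the null space of `B` (the selector of
zero components of `x*`) trivially. -/
theorem stmt0 {m n : ℕ} (A : Matrix (Fin m) (Fin n) ℝ) (b : Fin m → ℝ)
    (hrank : A.rank = m)
    (xs : Fin n → ℝ)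
    (hfeas : A.mulVec xs = b)
    (hmin : ∀ x : Fin n → ℝ, A.mulVec x = b → ∑ i, |xs i| ≤ ∑ i, |x i|)
    (huniq : ∀ x : Fin n → ℝ, A.mulVec x = b → (∑ i, |x i|) = ∑ i, |xs i| → x = xs) :
    ∀ z : Fin n → ℝ, A.mulVec z = 0 → (∀ i, xs i = 0 → z i = 0) → z = 0 := by
  intro z hz hzero
  by_cases hall : ∀ i, xs i = 0
  · funext i; exact hzero i (hall i)
  push_neg at hall
  obtain ⟨i0, hi0⟩ := hall
  set S : Finset (Fin n) := Finset.univ.filter (fun i => xs i ≠ 0) with hS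
  have hSne : S.Nonempty := ⟨i0, by simp [hS, hi0]⟩
  set δ : ℝ := S.inf' hSne (fun i => |xs i| / (|z i| + 1)) with hδ
  have hδpos : 0 < δ := by
    rw [hδ, Finset.lt_inf'_iff]
    intro i hi
    have hxi : xs i ≠ 0 := by simpa [hS] using hi
    have h1 : 0 < |xs i| := abs_pos.mpr hxi
    have h2 : 0 < |z i| + 1 := by positivity
    positivity
  have hδbound : ∀ i, xs i ≠ 0 → δ * |z i| ≤ |xs i| := by
    intro i hxi
    have hi : i ∈ S := by simp [hS, hxi]
    have h1 : δ ≤ |xs i| / (|z i| + 1) := Finset.inf'_le _ hi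
    have h2 : 0 < |z i| + 1 := by positivity
    have h3 : δ * (|z i| + 1) ≤ |xs i| := (le_div_iff₀ h2).mp h1
    nlinarith [abs_nonneg (z i), hδpos.le]
  set s : ℝ := ∑ i, Real.sign (xs i) * z i with hs
  set t : ℝ := if 0 ≤ s then -δ else δ with ht
  have ht0 : t ≠ 0 := by
    rw [ht]; split <;> [exact neg_ne_zero.mpr hδpos.ne'; exact hδpos.ne']
  have htabs : |t| = δ := by
    rw [ht]; split <;> simp [abs_of_pos hδpos]
  have hts : t * s ≤ 0 := by
    rw [ht]; split
    · next h => nlinarith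
    · next h => push_neg at h; nlinarith
  have key : ∀ i, |xs i + t * z i| = |xs i| + t * (Real.sign (xs i) * z i) := by
    intro i
    by_cases hxi : xs i = 0
    · simp [hxi, hzero i hxi]
    have hb : |t * z i| ≤ |xs i| := by
      rw [abs_mul, htabs]; exact hδbound i hxi
    rcases lt_or_gt_of_ne hxi with hneg | hpos
    · have hsign : Real.sign (xs i) = -1 := Real.sign_of_neg hneg
      have h1 : xs i + t * z i ≤ 0 := by
        have := neg_abs_le (t * z i)
        have habs : |xs i| = -xs i := abs_of_neg hneg
        nlinarith [le_abs_self (t * z i)]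
      rw [abs_of_nonpos h1, abs_of_neg hneg, hsign]; ring
    · have hsign : Real.sign (xs i) = 1 := Real.sign_of_pos hpos
      have h1 : 0 ≤ xs i + t * z i := by
        have habs : |xs i| = xs i := abs_of_pos hpos
        nlinarith [neg_abs_le (t * z i)]
      rw [abs_of_nonneg h1, abs_of_pos hpos, hsign]; ring
  set x : Fin n → ℝ := fun i => xs i + t * z i with hx
  have hxfeas : A.mulVec x = b := by
    have : x = xs + t • z := by funext i; simp [hx, smul_eq_mul]
    rw [this, Matrix.mulVec_add, Matrix.mulVec_smul, hz, hfeas]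
    simp
  have hsum : ∑ i, |x i| = (∑ i, |xs i|) + t * s := by
    simp only [hx, key, hs, Finset.sum_add_distrib, Finset.mul_sum]
  have hle := hmin x hxfeas
  have heq : ∑ i, |x i| = ∑ i, |xs i| := by
    rw [hsum] at hle ⊢
    nlinarith
  have hxeq := huniq x hxfeas heq
  funext i
  have := congrFun hxeq i
  simp only [hx] at this
  have htz : t * z i = 0 := by linarith
  have := mul_eq_zero.mp htz
  tauto
end

section
/- If T is firmly non-expansive on a Hilbert space, y* is a fixed point of T, and y^{k+1} = T(y^k), then ||y^k - y^{k+1}||² ≤ (1/(k+1))·||y^0 - y*||² for all k ≥ 0. -/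
open scoped RealInnerProductSpace

/-- If `T` is firmly non-expansive on a real Hilbert space, `y*` is a fixed point,
and `y^{k+1} = T(y^k)`, then `‖y^k - y^{k+1}‖² ≤ ‖y^0 - y*‖²/(k+1)`. -/
theorem stmt3 {H : Type*} [NormedAddCommGroup H] [InnerProductSpace ℝ H]
    [CompleteSpace H]
    (T : H → H) (hT : ∀ u v : H, ‖T u - T v‖^2 ≤ ⟪u - v, T u - T v⟫)
    (ystar : H) (hfix : T ystar = ystar)
    (y : ℕ → H) (hiter : ∀ k : ℕ, y (k+1) = T (y k)) :
    ∀ k : ℕ, ‖y k - y (k+1)‖^2 ≤ (1 / ((k : ℝ) + 1)) * ‖y 0 - ystar‖^2 := by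
  have nonexp : ∀ u v : H, ‖T u - T v‖ ≤ ‖u - v‖ := by
    intro u v
    rcases eq_or_lt_of_le (norm_nonneg (T u - T v)) with h0 | h0
    · rw [← h0]; exact norm_nonneg _
    · have h := hT u v
      have hcs := real_inner_le_norm (u - v) (T u - T v)
      nlinarith
  have fejer : ∀ k : ℕ, ‖y (k+1) - ystar‖^2 + ‖y k - y (k+1)‖^2 ≤ ‖y k - ystar‖^2 := by
    intro k
    have h := hT (y k) ystar
    rw [hfix, ← hiter k] at h
    have hid : y k - y (k+1) = (y k - ystar) - (y (k+1) - ystar) := by abel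
    rw [hid]
    nlinarith [norm_sub_sq_real (y k - ystar) (y (k+1) - ystar)]
  have rmono : ∀ k : ℕ, ‖y (k+1) - y (k+1+1)‖^2 ≤ ‖y k - y (k+1)‖^2 := by
    intro k
    have h := nonexp (y k) (y (k+1))
    rw [← hiter k, ← hiter (k+1)] at h
    nlinarith [norm_nonneg (y (k+1) - y (k+1+1)), norm_nonneg (y k - y (k+1))]
  have key : ∀ k : ℕ, ((k : ℝ) + 1) * ‖y k - y (k+1)‖^2 + ‖y (k+1) - ystar‖^2
      ≤ ‖y 0 - ystar‖^2 := by
    intro k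
    induction k with
    | zero =>
      have h := fejer 0
      push_cast
      linarith
    | succ n ih =>
      have h1 := fejer (n+1)
      have h2 := rmono n
      have hn : (0:ℝ) ≤ (n : ℝ) + 1 := by positivity
      push_cast
      push_cast at ih
      nlinarith
  intro k
  have hpos : (0:ℝ) < (k : ℝ) + 1 := by positivity
  rw [one_div, inv_mul_eq_div, le_div_iff₀ hpos]
  have := key k
  nlinarith [sq_nonneg ‖y (k+1) - ystar‖]
end

section
/- Any two fixed points y*_1, y*_2 of the Douglas–Rachford operator T_γ satisfy y*_1 - y*_2 ∈ R(A^T) ∩ R(B^T); consequently the fixed point is unique if and only if R(A^T) ∩ R(B^T) = {0}. -/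
open Finset Matrix

/-- Soft-thresholding by `γ`. -/
noncomputable def softThresh {n : ℕ} (γ : ℝ) (x : Fin n → ℝ) : Fin n → ℝ :=
  fun i => Real.sign (x i) * max (|x i| - γ) 0

/-- Projection onto the affine set `{x : Ax = b}`. -/
noncomputable def projAff {m n : ℕ} (A : Matrix (Fin m) (Fin n) ℝ) (b : Fin m → ℝ)
    (x : Fin n → ℝ) : Fin n → ℝ :=
  x + (Aᵀ * (A * Aᵀ)⁻¹).mulVec (b - A.mulVec x)

/-- Douglas-Rachford operator `T_γ = S_γ ∘ (2P - I) + I - P` for basis pursuit. -/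
noncomputable def DR {m n : ℕ} (A : Matrix (Fin m) (Fin n) ℝ) (b : Fin m → ℝ)
    (γ : ℝ) (y : Fin n → ℝ) : Fin n → ℝ :=
  softThresh γ ((2 : ℝ) • projAff A b y - y) + y - projAff A b y


lemma gram_isUnit {m n : ℕ} (A : Matrix (Fin m) (Fin n) ℝ) (hrank : A.rank = m) :
    IsUnit (A * Aᵀ) := by
  rw [← Matrix.mulVec_surjective_iff_isUnit]
  have h : (A * Aᵀ).rank = m := by rw [Matrix.rank_self_mul_transpose, hrank]
  have htop : LinearMap.range (A * Aᵀ).mulVecLin = ⊤ := by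
    apply Submodule.eq_top_of_finrank_eq
    rw [Matrix.rank] at h
    simp [h, Module.finrank_pi]
  intro y
  have : y ∈ LinearMap.range (A * Aᵀ).mulVecLin := htop ▸ Submodule.mem_top
  obtain ⟨x, hx⟩ := this
  exact ⟨x, hx⟩

lemma projAff_sub {m n : ℕ} (A : Matrix (Fin m) (Fin n) ℝ) (b : Fin m → ℝ) (y : Fin n → ℝ) :
    projAff A b y - y
      = Aᵀ.mulVec ((A * Aᵀ)⁻¹.mulVec (b - A.mulVec y)) := by
  simp [projAff, Matrix.mulVec_mulVec]

lemma projAff_feas {m n : ℕ} (A : Matrix (Fin m) (Fin n) ℝ) (hU : IsUnit (A * Aᵀ))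
    (b : Fin m → ℝ) (y : Fin n → ℝ) :
    A.mulVec (projAff A b y) = b := by
  have hinv : (A * Aᵀ) * (A * Aᵀ)⁻¹ = 1 :=
    Matrix.mul_nonsing_inv _ ((Matrix.isUnit_iff_isUnit_det _).mp hU)
  simp only [projAff, Matrix.mulVec_add, Matrix.mulVec_mulVec]
  rw [← Matrix.mul_assoc, hinv]
  simp

lemma soft_eval (γ t : ℝ) (hγ : 0 < γ) :
    Real.sign t * max (|t| - γ) 0 = if γ < t then t - γ else if t < -γ then t + γ else 0 := by
  split_ifs with h1 h2
  · rw [Real.sign_of_pos (by linarith), abs_of_pos (by linarith), max_eq_left (by linarith)]; ring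
  · rw [Real.sign_of_neg (by linarith), abs_of_neg (by linarith), max_eq_left (by linarith)]; ring
  · rw [max_eq_right (by rw [sub_nonpos]; exact abs_le.2 ⟨by linarith, by linarith⟩)]; ring

lemma soft_fix_forward (γ a u : ℝ) (hγ : 0 < γ)
    (h : Real.sign (a + u) * max (|a + u| - γ) 0 = a) :
    (0 < a → u = γ) ∧ (a < 0 → u = -γ) ∧ (a = 0 → |u| ≤ γ) := by
  rw [soft_eval γ (a + u) hγ] at h
  split_ifs at h with h1 h2
  · constructor
    · intro _; linarith
    · constructor
      · intro ha; linarith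
      · intro ha; linarith
  · refine ⟨fun ha => by linarith, fun ha => by linarith, fun ha => by linarith⟩
  · subst h
    refine ⟨fun ha => by linarith, fun ha => by linarith,
      fun _ => abs_le.2 ⟨by simpa using h2, by simpa using h1⟩⟩

lemma soft_fix_backward (γ a u : ℝ) (hγ : 0 < γ)
    (h1 : 0 < a → u = γ) (h2 : a < 0 → u = -γ) (h3 : a = 0 → |u| ≤ γ) :
    Real.sign (a + u) * max (|a + u| - γ) 0 = a := by
  rw [soft_eval γ (a + u) hγ]
  rcases lt_trichotomy a 0 with ha|ha|ha
  · rw [h2 ha]; rw [if_neg (by linarith), if_pos (by linarith)]; ring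
  · subst ha
    have := h3 rfl
    rw [abs_le] at this
    rw [if_neg (by simpa using this.2), if_neg (by simpa using this.1)]
  · rw [h1 ha, if_pos (by linarith)]; ring

lemma range_dot_ker {m n : ℕ} (A : Matrix (Fin m) (Fin n) ℝ) (w : Fin m → ℝ)
    (d : Fin n → ℝ) (hd : A.mulVec d = 0) :
    ∑ i, Aᵀ.mulVec w i * d i = 0 := by
  have : Aᵀ.mulVec w ⬝ᵥ d = 0 := by
    rw [dotProduct_comm, Matrix.dotProduct_mulVec, Matrix.vecMul_transpose, hd]
    simp
  simpa [dotProduct] using this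

lemma fix_necessary {m n : ℕ} (A : Matrix (Fin m) (Fin n) ℝ) (b : Fin m → ℝ)
    (hU : IsUnit (A * Aᵀ)) (γ : ℝ) (hγ : 0 < γ) (xs : Fin n → ℝ)
    (hfeas : A.mulVec xs = b)
    (hmin : ∀ x : Fin n → ℝ, A.mulVec x = b → ∑ i, |xs i| ≤ ∑ i, |x i|)
    (huniq : ∀ x : Fin n → ℝ, A.mulVec x = b → (∑ i, |x i|) = ∑ i, |xs i| → x = xs)
    (y : Fin n → ℝ) (hy : DR A b γ y = y) :
    ∃ w : Fin m → ℝ, y = xs - Aᵀ.mulVec w ∧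
      (∀ i, 0 < xs i → Aᵀ.mulVec w i = γ) ∧
      (∀ i, xs i < 0 → Aᵀ.mulVec w i = -γ) ∧
      (∀ i, xs i = 0 → |Aᵀ.mulVec w i| ≤ γ) := by
  set x := projAff A b y with hx
  set w := (A * Aᵀ)⁻¹.mulVec (b - A.mulVec y) with hw
  have hxy : x - y = Aᵀ.mulVec w := projAff_sub A b y
  have hAx : A.mulVec x = b := projAff_feas A hU b y
  set u := Aᵀ.mulVec w with hu
  -- pointwise fixed point conditions
  have hpt : ∀ i, Real.sign (x i + u i) * max (|x i + u i| - γ) 0 = x i := by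
    intro i
    have := congrFun hy i
    simp only [DR, softThresh, Pi.add_apply, Pi.sub_apply, Pi.smul_apply, smul_eq_mul] at this
    have h2 : (2 : ℝ) * x i - y i = x i + u i := by
      have := congrFun hxy i
      simp only [Pi.sub_apply] at this
      linarith [this]
    rw [h2] at this
    linarith [this]
  have hchar : ∀ i, (0 < x i → u i = γ) ∧ (x i < 0 → u i = -γ) ∧ (x i = 0 → |u i| ≤ γ) :=
    fun i => soft_fix_forward γ (x i) (u i) hγ (hpt i)
  -- u i * x i = γ * |x i|
  have hux : ∀ i, u i * x i = γ * |x i| := by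
    intro i
    rcases lt_trichotomy (x i) 0 with h|h|h
    · rw [(hchar i).2.1 h, abs_of_neg h]; ring
    · rw [h, abs_zero]; ring
    · rw [(hchar i).1 h, abs_of_pos h]
  have huabs : ∀ i, |u i| ≤ γ := by
    intro i
    rcases lt_trichotomy (x i) 0 with h|h|h
    · rw [(hchar i).2.1 h, abs_neg, abs_of_pos hγ]
    · exact (hchar i).2.2 h
    · rw [(hchar i).1 h, abs_of_pos hγ]
  -- ∑ u i * (xs i - x i) = 0
  have hker : A.mulVec (xs - x) = 0 := by
    rw [Matrix.mulVec_sub, hfeas, hAx, sub_self]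
  have hdot : ∑ i, u i * (xs i - x i) = 0 := range_dot_ker A w _ hker
  have h1 : γ * ∑ i, |x i| = ∑ i, u i * x i := by
    rw [Finset.mul_sum]
    exact Finset.sum_congr rfl fun i _ => (hux i).symm
  have h2 : ∑ i, u i * xs i ≤ γ * ∑ i, |xs i| := by
    rw [Finset.mul_sum]
    refine Finset.sum_le_sum fun i _ => ?_
    calc u i * xs i ≤ |u i * xs i| := le_abs_self _
    _ = |u i| * |xs i| := abs_mul _ _
    _ ≤ γ * |xs i| := mul_le_mul_of_nonneg_right (huabs i) (abs_nonneg _)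
  have h3 : ∑ i, u i * xs i = ∑ i, u i * x i := by
    have : ∑ i, u i * xs i - ∑ i, u i * x i = 0 := by
      rw [← Finset.sum_sub_distrib]
      rw [← hdot]
      exact Finset.sum_congr rfl fun i _ => by ring
    linarith
  have hle : ∑ i, |x i| ≤ ∑ i, |xs i| := by
    have := h1.trans_le (h3 ▸ h2)
    exact (mul_le_mul_iff_right₀ hγ).mp this
  have heq : ∑ i, |x i| = ∑ i, |xs i| := le_antisymm hle (hmin x hAx)
  have hxxs : x = xs := huniq x hAx heq
  refine ⟨w, ?_, ?_, ?_, ?_⟩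
  · funext i
    have := congrFun hxy i
    simp only [Pi.sub_apply] at this ⊢
    have hxi := congrFun hxxs i
    rw [← hu]
    linarith [this]
  · intro i hi
    have := ((hchar i).1)
    rw [hxxs] at this
    exact this hi
  · intro i hi
    have := ((hchar i).2.1)
    rw [hxxs] at this
    exact this hi
  · intro i hi
    have := ((hchar i).2.2)
    rw [hxxs] at this
    exact this hi

lemma fix_sufficient {m n : ℕ} (A : Matrix (Fin m) (Fin n) ℝ) (b : Fin m → ℝ)
    (hU : IsUnit (A * Aᵀ)) (γ : ℝ) (hγ : 0 < γ) (xs : Fin n → ℝ)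
    (hfeas : A.mulVec xs = b) (w : Fin m → ℝ)
    (h1 : ∀ i, 0 < xs i → Aᵀ.mulVec w i = γ)
    (h2 : ∀ i, xs i < 0 → Aᵀ.mulVec w i = -γ)
    (h3 : ∀ i, xs i = 0 → |Aᵀ.mulVec w i| ≤ γ) :
    DR A b γ (xs - Aᵀ.mulVec w) = xs - Aᵀ.mulVec w := by
  set u := Aᵀ.mulVec w with hu
  set y := xs - u with hy
  have hinv : (A * Aᵀ)⁻¹ * (A * Aᵀ) = 1 :=
    Matrix.nonsing_inv_mul _ ((Matrix.isUnit_iff_isUnit_det _).mp hU)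
  have hproj : projAff A b y = xs := by
    have hAy : b - A.mulVec y = (A * Aᵀ).mulVec w := by
      rw [hy, Matrix.mulVec_sub, hfeas, hu, Matrix.mulVec_mulVec]
      simp
    rw [projAff, hAy, Matrix.mulVec_mulVec, Matrix.mul_assoc, hinv]
    simp [hy, hu]
  rw [DR, hproj]
  have hsoft : softThresh γ ((2 : ℝ) • xs - y) = xs := by
    funext i
    have harg : ((2 : ℝ) • xs - y) i = xs i + u i := by
      simp [hy]; ring
    rw [softThresh, harg]
    rcases lt_trichotomy (xs i) 0 with h|h|h
    · exact soft_fix_backward γ (xs i) (u i) hγ (fun ha => absurd ha (by linarith))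
        (fun _ => h2 i h) (fun ha => absurd ha (by linarith))
    · exact soft_fix_backward γ (xs i) (u i) hγ (fun ha => absurd ha (by linarith))
        (fun ha => absurd ha (by linarith)) (fun _ => h3 i h)
    · exact soft_fix_backward γ (xs i) (u i) hγ (fun _ => h1 i h)
        (fun ha => absurd ha (by linarith)) (fun ha => absurd ha (by linarith))
  rw [hsoft]
  funext i; simp

lemma nsp_strict {m n : ℕ} (A : Matrix (Fin m) (Fin n) ℝ) (b : Fin m → ℝ)
    (xs : Fin n → ℝ) (hfeas : A.mulVec xs = b)
    (hmin : ∀ x : Fin n → ℝ, A.mulVec x = b → ∑ i, |xs i| ≤ ∑ i, |x i|)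
    (huniq : ∀ x : Fin n → ℝ, A.mulVec x = b → (∑ i, |x i|) = ∑ i, |xs i| → x = xs)
    (d : Fin n → ℝ) (hd : A.mulVec d = 0) (hd0 : d ≠ 0) :
    0 < ∑ i, (if xs i = 0 then |d i| else Real.sign (xs i) * d i) := by
  rcases isEmpty_or_nonempty (Fin n) with hE | hNE
  · exact absurd (funext fun i => hE.elim i) hd0
  -- choose τ
  set g : Fin n → ℝ := fun i => if xs i = 0 then 1 else |xs i| / (|d i| + 1) with hg
  set τ := Finset.univ.inf' Finset.univ_nonempty g with hτ
  have hgpos : ∀ i, 0 < g i := by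
    intro i
    by_cases h : xs i = 0
    · simp [hg, h]
    · simp only [hg, h, if_false]
      exact div_pos (abs_pos.mpr h) (by positivity)
  have hτpos : 0 < τ := by
    obtain ⟨i, -, hi⟩ := Finset.exists_mem_eq_inf' Finset.univ_nonempty g
    rw [hτ, hi]; exact hgpos i
  have hτle : ∀ i, xs i ≠ 0 → τ * |d i| ≤ |xs i| := by
    intro i hi
    have h1 : τ ≤ g i := Finset.inf'_le g (Finset.mem_univ i)
    have h2 : g i = |xs i| / (|d i| + 1) := by simp [hg, hi]
    have h3 : τ * |d i| ≤ (|xs i| / (|d i| + 1)) * |d i| := by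
      apply mul_le_mul_of_nonneg_right _ (abs_nonneg _)
      rw [← h2]; exact h1
    refine h3.trans ?_
    rw [div_mul_eq_mul_div, div_le_iff₀ (by positivity)]
    have : |d i| ≤ |d i| + 1 := by linarith
    nlinarith [abs_nonneg (xs i), abs_nonneg (d i)]
  -- norm expansion
  have habs : ∀ i, |xs i + τ * d i| = |xs i| + τ * (if xs i = 0 then |d i| else Real.sign (xs i) * d i) := by
    intro i
    rcases lt_trichotomy (xs i) 0 with h|h|h
    · have hne : xs i ≠ 0 := ne_of_lt h
      rw [if_neg hne, Real.sign_of_neg h]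
      have hb : τ * d i ≤ τ * |d i| := mul_le_mul_of_nonneg_left (le_abs_self _) hτpos.le
      have : xs i + τ * d i ≤ 0 := by
        have := hτle i hne
        rw [abs_of_neg h] at this
        linarith
      rw [abs_of_nonpos this, abs_of_neg h]; ring
    · simp [h, abs_mul, abs_of_pos hτpos]
    · have hne : xs i ≠ 0 := ne_of_gt h
      rw [if_neg hne, Real.sign_of_pos h]
      have hb : -(τ * |d i|) ≤ τ * d i := by
        have := mul_le_mul_of_nonneg_left (neg_abs_le (d i)) hτpos.le
        linarith [this]
      have : 0 ≤ xs i + τ * d i := by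
        have := hτle i hne
        rw [abs_of_pos h] at this
        linarith
      rw [abs_of_nonneg this, abs_of_pos h]; ring
  set x' := xs + τ • d with hx'
  have hAx' : A.mulVec x' = b := by
    rw [hx', Matrix.mulVec_add, hfeas, Matrix.mulVec_smul, hd]
    simp
  have hsum : ∑ i, |x' i| = ∑ i, |xs i| + τ * ∑ i, (if xs i = 0 then |d i| else Real.sign (xs i) * d i) := by
    rw [Finset.mul_sum, ← Finset.sum_add_distrib]
    refine Finset.sum_congr rfl fun i _ => ?_
    simpa [hx'] using habs i
  have hge : 0 ≤ ∑ i, (if xs i = 0 then |d i| else Real.sign (xs i) * d i) := by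
    have := hmin x' hAx'
    rw [hsum] at this
    nlinarith
  rcases hge.lt_or_eq with h|h
  · exact h
  · exfalso
    have : ∑ i, |x' i| = ∑ i, |xs i| := by rw [hsum, ← h]; ring
    have hx'xs := huniq x' hAx' this
    apply hd0
    have : τ • d = 0 := by
      have := sub_eq_zero.mpr hx'xs
      rw [hx'] at this
      funext i
      have hi := congrFun this i
      simpa using hi
    funext i
    have hi := congrFun this i
    simp only [Pi.smul_apply, smul_eq_mul, Pi.zero_apply] at hi
    have := mul_eq_zero.mp hi
    rcases this with h'|h'
    · exact absurd h' (ne_of_gt hτpos)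
    · simpa using h'

lemma nsp_eps {m n : ℕ} (A : Matrix (Fin m) (Fin n) ℝ) (b : Fin m → ℝ)
    (xs : Fin n → ℝ) (hfeas : A.mulVec xs = b)
    (hmin : ∀ x : Fin n → ℝ, A.mulVec x = b → ∑ i, |xs i| ≤ ∑ i, |x i|)
    (huniq : ∀ x : Fin n → ℝ, A.mulVec x = b → (∑ i, |x i|) = ∑ i, |xs i| → x = xs) :
    ∃ ε : ℝ, 0 < ε ∧ ε ≤ 1 ∧ ∀ d : Fin n → ℝ, A.mulVec d = 0 →
      0 ≤ ∑ i, (if xs i = 0 then (1 - ε) * |d i| else Real.sign (xs i) * d i) := by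
  set Φ : (Fin n → ℝ) → ℝ := fun d => ∑ i, (if xs i = 0 then |d i| else Real.sign (xs i) * d i)
    with hΦ
  have hΦcont : Continuous Φ := by
    apply continuous_finset_sum
    intro i _
    by_cases h : xs i = 0
    · simpa [h] using (continuous_apply i).abs
    · simp [h]; exact continuous_const.mul (continuous_apply i)
  set K : Set (Fin n → ℝ) := {d | A.mulVec d = 0} ∩ Metric.sphere 0 1 with hK
  have hKer : IsClosed {d : Fin n → ℝ | A.mulVec d = 0} := by
    have : {d : Fin n → ℝ | A.mulVec d = 0} = A.mulVecLin ⁻¹' {0} := by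
      ext d; simp [Matrix.mulVecLin]
    rw [this]
    exact IsClosed.preimage A.mulVecLin.continuous_of_finiteDimensional isClosed_singleton
  have hKcomp : IsCompact K := (isCompact_sphere 0 1).inter_left hKer
  rcases Set.eq_empty_or_nonempty K with hKe | hKne
  · refine ⟨1, one_pos, le_refl 1, fun d hd => ?_⟩
    have hd0 : d = 0 := by
      by_contra hc
      have hdn : ‖d‖ ≠ 0 := norm_ne_zero_iff.mpr hc
      have : ‖d‖⁻¹ • d ∈ K := by
        constructor
        · show A.mulVec (‖d‖⁻¹ • d) = 0
          rw [Matrix.mulVec_smul, hd]; simp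
        · simp [norm_smul, abs_of_nonneg (norm_nonneg d), inv_mul_cancel₀ hdn]
      rw [hKe] at this
      exact this
    subst hd0
    simp
  obtain ⟨d0, hd0K, hd0min⟩ := hKcomp.exists_isMinOn hKne hΦcont.continuousOn
  have hd0ne : d0 ≠ 0 := by
    intro h
    have := hd0K.2
    rw [h] at this
    simp at this
  have hc : 0 < Φ d0 :=
    nsp_strict A b xs hfeas hmin huniq d0 hd0K.1 hd0ne
  set c := Φ d0 with hcdef
  refine ⟨min 1 (c / (n + 1)), lt_min one_pos (by positivity), min_le_left _ _, ?_⟩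
  set ε := min 1 (c / (n + 1)) with hε
  intro d hd
  rcases eq_or_ne d 0 with rfl | hdne
  · simp
  have hr : 0 < ‖d‖ := norm_pos_iff.mpr hdne
  set d' := ‖d‖⁻¹ • d with hd'
  have hd'K : d' ∈ K := by
    constructor
    · show A.mulVec d' = 0
      rw [hd', Matrix.mulVec_smul, hd]; simp
    · simp [hd', norm_smul, abs_of_nonneg (norm_nonneg d), inv_mul_cancel₀ (ne_of_gt hr)]
  have hΦd' : c ≤ Φ d' := hd0min hd'K
  have hhomog : Φ d = ‖d‖ * Φ d' := by
    rw [hΦ, Finset.mul_sum]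
    refine Finset.sum_congr rfl fun i _ => ?_
    by_cases h : xs i = 0
    · simp only [h, if_true, hd', Pi.smul_apply, smul_eq_mul, abs_mul, abs_inv,
        abs_of_nonneg (norm_nonneg d)]
      try field_simp
    · simp only [h, if_false, hd', Pi.smul_apply, smul_eq_mul]
      try field_simp
      try ring
  have habs_sum : ∑ i, |d i| ≤ (n : ℝ) * ‖d‖ := by
    calc ∑ i, |d i| ≤ ∑ _i : Fin n, ‖d‖ := by
          refine Finset.sum_le_sum fun i _ => ?_
          simpa [Real.norm_eq_abs] using norm_le_pi_norm d i
    _ = (n : ℝ) * ‖d‖ := by simp [Finset.sum_const]; try ring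
  have hsplit : ∑ i, (if xs i = 0 then (1 - ε) * |d i| else Real.sign (xs i) * d i)
      = Φ d - ε * ∑ i, (if xs i = 0 then |d i| else 0) := by
    rw [hΦ, Finset.mul_sum, ← Finset.sum_sub_distrib]
    refine Finset.sum_congr rfl fun i _ => ?_
    by_cases h : xs i = 0 <;> simp [h] <;> ring
  rw [hsplit]
  have h1 : ∑ i, (if xs i = 0 then |d i| else 0) ≤ (n : ℝ) * ‖d‖ := by
    refine le_trans ?_ habs_sum
    refine Finset.sum_le_sum fun i _ => ?_
    by_cases h : xs i = 0 <;> simp [h, abs_nonneg]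
  have h2 : ε * ∑ i, (if xs i = 0 then |d i| else 0) ≤ ε * ((n : ℝ) * ‖d‖) :=
    mul_le_mul_of_nonneg_left h1 (le_of_lt (lt_min one_pos (by positivity)))
  have h3 : ε * ((n : ℝ) * ‖d‖) ≤ c * ‖d‖ := by
    have hεc : ε ≤ c / (n + 1) := min_le_right _ _
    have : ε * (n : ℝ) ≤ c := by
      calc ε * (n : ℝ) ≤ (c / (n + 1)) * (n : ℝ) :=
            mul_le_mul_of_nonneg_right hεc (Nat.cast_nonneg n)
      _ ≤ c := by
          rw [div_mul_eq_mul_div, div_le_iff₀ (by positivity)]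
          nlinarith [hc]
    calc ε * ((n : ℝ) * ‖d‖) = (ε * (n : ℝ)) * ‖d‖ := by ring
    _ ≤ c * ‖d‖ := mul_le_mul_of_nonneg_right this (norm_nonneg d)
  have h4 : c * ‖d‖ ≤ Φ d := by
    rw [hhomog]
    calc c * ‖d‖ = ‖d‖ * c := by ring
    _ ≤ ‖d‖ * Φ d' := mul_le_mul_of_nonneg_left hΦd' (norm_nonneg d)
  linarith

lemma cert_exists {m n : ℕ} (A : Matrix (Fin m) (Fin n) ℝ) (xs : Fin n → ℝ)
    (ε : ℝ) (hε0 : 0 < ε) (hε1 : ε ≤ 1)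
    (hnsp : ∀ d : Fin n → ℝ, A.mulVec d = 0 →
      0 ≤ ∑ i, (if xs i = 0 then (1 - ε) * |d i| else Real.sign (xs i) * d i)) :
    ∃ w : Fin m → ℝ, (∀ i, xs i ≠ 0 → Aᵀ.mulVec w i = Real.sign (xs i)) ∧
      (∀ i, xs i = 0 → |Aᵀ.mulVec w i| ≤ 1 - ε) := by
  set lo : Fin n → ℝ := fun i => if xs i = 0 then -(1 - ε) else Real.sign (xs i) with hlo
  set hi : Fin n → ℝ := fun i => if xs i = 0 then (1 - ε) else Real.sign (xs i) with hhi
  set K : Set (Fin n → ℝ) := Set.univ.pi (fun i => Set.Icc (lo i) (hi i)) with hKdef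
  set t : Set (Fin n → ℝ) := ↑(LinearMap.range Aᵀ.mulVecLin) with ht
  by_contra hcon
  push_neg at hcon
  have hdisj : Disjoint K t := by
    rw [Set.disjoint_left]
    rintro η hηK ⟨w, hw⟩
    have hw' : Aᵀ.mulVec w = η := hw
    have hP : ∀ i, xs i ≠ 0 → Aᵀ.mulVec w i = Real.sign (xs i) := by
      intro i hixs
      have := hηK i (Set.mem_univ i)
      simp only [hlo, hhi, hixs, if_neg hixs, Set.mem_Icc] at this
      rw [hw']
      exact le_antisymm this.2 this.1
    obtain ⟨i, hi0, hgt⟩ := hcon w hP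
    have := hηK i (Set.mem_univ i)
    simp only [hlo, hhi, hi0, if_pos hi0, Set.mem_Icc] at this
    rw [hw'] at hgt
    exact absurd (abs_le.mpr ⟨this.1, this.2⟩) (not_le.mpr hgt)
  -- separate
  have hKconv : Convex ℝ K := convex_pi (fun i _ => convex_Icc _ _)
  have hKcomp : IsCompact K := isCompact_univ_pi (fun i => isCompact_Icc)
  have htconv : Convex ℝ t := (LinearMap.range Aᵀ.mulVecLin).convex
  have htclosed : IsClosed t := Submodule.closed_of_finiteDimensional _
  obtain ⟨f, u, v, hfu, huv, hvf⟩ :=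
    geometric_hahn_banach_compact_closed hKconv hKcomp htconv htclosed hdisj
  -- f vanishes on t
  have hf0 : ∀ y ∈ LinearMap.range Aᵀ.mulVecLin, f y = 0 := by
    intro y hy
    by_contra hfy
    have hmem : ((v - 1) / f y) • y ∈ LinearMap.range Aᵀ.mulVecLin :=
      Submodule.smul_mem _ _ hy
    have := hvf _ hmem
    rw [_root_.map_smul] at this
    simp only [smul_eq_mul] at this
    rw [div_mul_cancel₀ _ hfy] at this
    linarith
  have hv0 : v < 0 := by
    have := hvf 0 (Submodule.zero_mem _)
    rw [map_zero] at this
    linarith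
  -- extract d
  set d : Fin n → ℝ := fun i => f (fun j => if i = j then (1 : ℝ) else 0) with hd
  have hfd : ∀ a : Fin n → ℝ, f a = ∑ i, a i * d i := by
    intro a
    conv_lhs => rw [pi_eq_sum_univ a]
    rw [map_sum]
    refine Finset.sum_congr rfl fun i _ => ?_
    rw [_root_.map_smul]
    simp [hd]
  have hAd : A.mulVec d = 0 := by
    have hdot : ∀ w' : Fin m → ℝ, (A.mulVec d) ⬝ᵥ w' = 0 := by
      intro w'
      have h1 : f (Aᵀ.mulVec w') = 0 := hf0 _ ⟨w', rfl⟩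
      rw [hfd] at h1
      have : Aᵀ.mulVec w' ⬝ᵥ d = 0 := by
        simpa [dotProduct] using h1
      rw [dotProduct_comm, Matrix.dotProduct_mulVec, Matrix.vecMul_transpose] at this
      exact this
    have := hdot (A.mulVec d)
    exact dotProduct_self_eq_zero.mp this
  -- test point in K
  set a : Fin n → ℝ := fun i => if xs i = 0 then (1 - ε) * Real.sign (d i) else Real.sign (xs i)
    with ha
  have haK : a ∈ K := by
    intro i _
    by_cases h : xs i = 0
    · simp only [ha, hlo, hhi, h, if_true, Set.mem_Icc]
      have h1 : |Real.sign (d i)| ≤ 1 := by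
        rcases lt_trichotomy (d i) 0 with hd'|hd'|hd' <;>
          simp [Real.sign_of_neg, Real.sign_of_pos, hd']
      rw [abs_le] at h1
      constructor <;> nlinarith [h1.1, h1.2]
    · simp [ha, hlo, hhi, h, Set.mem_Icc]
  have hfa := hfu a haK
  have hfaval : f a = ∑ i, (if xs i = 0 then (1 - ε) * |d i| else Real.sign (xs i) * d i) := by
    rw [hfd]
    refine Finset.sum_congr rfl fun i _ => ?_
    by_cases h : xs i = 0
    · simp only [ha, h, if_true]
      have : Real.sign (d i) * d i = |d i| := by
        rcases lt_trichotomy (d i) 0 with hd'|hd'|hd'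
        · rw [Real.sign_of_neg hd', abs_of_neg hd']; ring
        · simp [hd']
        · rw [Real.sign_of_pos hd', abs_of_pos hd']; ring
      rw [mul_assoc, this]
    · simp [ha, h]
  have := hnsp d hAd
  rw [← hfaval] at this
  linarith


/-- Any two fixed points of `T_γ` differ by an element of `R(Aᵀ) ∩ R(Bᵀ)`
(where `R(Bᵀ)` consists of vectors supported on the zero set of `x*`); consequently
the fixed point is unique iff `R(Aᵀ) ∩ R(Bᵀ) = {0}`. -/
theorem stmt6 {m n : ℕ} (A : Matrix (Fin m) (Fin n) ℝ) (b : Fin m → ℝ)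
    (hrank : A.rank = m) (γ : ℝ) (hγ : 0 < γ)
    (xs : Fin n → ℝ)
    (hfeas : A.mulVec xs = b)
    (hmin : ∀ x : Fin n → ℝ, A.mulVec x = b → ∑ i, |xs i| ≤ ∑ i, |x i|)
    (huniq : ∀ x : Fin n → ℝ, A.mulVec x = b → (∑ i, |x i|) = ∑ i, |xs i| → x = xs) :
    (∀ y1 y2 : Fin n → ℝ, DR A b γ y1 = y1 → DR A b γ y2 = y2 →
      (∃ z : Fin m → ℝ, y1 - y2 = Aᵀ.mulVec z) ∧ (∀ i, xs i ≠ 0 → y1 i - y2 i = 0)) ∧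
    ((∀ y1 y2 : Fin n → ℝ, DR A b γ y1 = y1 → DR A b γ y2 = y2 → y1 = y2) ↔
      (∀ v : Fin n → ℝ, (∃ z : Fin m → ℝ, v = Aᵀ.mulVec z) →
        (∀ i, xs i ≠ 0 → v i = 0) → v = 0)) := by
  have hU : IsUnit (A * Aᵀ) := gram_isUnit A hrank
  have hpart1 : ∀ y1 y2 : Fin n → ℝ, DR A b γ y1 = y1 → DR A b γ y2 = y2 →
      (∃ z : Fin m → ℝ, y1 - y2 = Aᵀ.mulVec z) ∧ (∀ i, xs i ≠ 0 → y1 i - y2 i = 0) := by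
    intro y1 y2 h1 h2
    obtain ⟨w1, hy1, hp1, hn1, hz1⟩ := fix_necessary A b hU γ hγ xs hfeas hmin huniq y1 h1
    obtain ⟨w2, hy2, hp2, hn2, hz2⟩ := fix_necessary A b hU γ hγ xs hfeas hmin huniq y2 h2
    constructor
    · refine ⟨w2 - w1, ?_⟩
      rw [hy1, hy2, Matrix.mulVec_sub]
      funext i
      simp only [Pi.sub_apply]
      ring
    · intro i hi
      rw [hy1, hy2]
      simp only [Pi.sub_apply]
      rcases lt_trichotomy (xs i) 0 with h|h|h
      · rw [hn1 i h, hn2 i h]; ring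
      · exact absurd h hi
      · rw [hp1 i h, hp2 i h]; ring
  refine ⟨hpart1, ?_, ?_⟩
  · -- forward
    intro hU1 v hvz hvsupp
    obtain ⟨z, hz⟩ := hvz
    obtain ⟨ε, hε0, hε1, hnsp⟩ := nsp_eps A b xs hfeas hmin huniq
    obtain ⟨w, hws, hwz⟩ := cert_exists A xs ε hε0 hε1 hnsp
    have hden : 0 < 1 + ∑ i, |v i| := by positivity
    set t := ε / (1 + ∑ i, |v i|) with htdef
    have ht : 0 < t := div_pos hε0 hden
    have htv : ∀ i, t * |v i| ≤ ε := by
      intro i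
      have h1 : |v i| ≤ 1 + ∑ j, |v j| := by
        have := Finset.single_le_sum (f := fun j => |v j|) (fun j _ => abs_nonneg (v j))
          (Finset.mem_univ i)
        linarith
      rw [htdef, div_mul_eq_mul_div, div_le_iff₀ hden]
      nlinarith [abs_nonneg (v i)]
    -- first fixed point
    have hf1 : DR A b γ (xs - Aᵀ.mulVec (γ • w)) = xs - Aᵀ.mulVec (γ • w) := by
      apply fix_sufficient A b hU γ hγ xs hfeas
      · intro i hi
        rw [Matrix.mulVec_smul]
        simp only [Pi.smul_apply, smul_eq_mul]
        rw [hws i (ne_of_gt hi), Real.sign_of_pos hi, mul_one]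
      · intro i hi
        rw [Matrix.mulVec_smul]
        simp only [Pi.smul_apply, smul_eq_mul]
        rw [hws i (ne_of_lt hi), Real.sign_of_neg hi]
        ring
      · intro i hi
        rw [Matrix.mulVec_smul]
        simp only [Pi.smul_apply, smul_eq_mul, abs_mul, abs_of_pos hγ]
        have := hwz i hi
        nlinarith
    -- second fixed point
    have hval : ∀ i, Aᵀ.mulVec (γ • w + (γ * t) • z) i
        = γ * (Aᵀ.mulVec w i + t * v i) := by
      intro i
      rw [Matrix.mulVec_add, Matrix.mulVec_smul, Matrix.mulVec_smul]
      simp only [Pi.add_apply, Pi.smul_apply, smul_eq_mul]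
      rw [hz]
      ring
    have hf2 : DR A b γ (xs - Aᵀ.mulVec (γ • w + (γ * t) • z))
        = xs - Aᵀ.mulVec (γ • w + (γ * t) • z) := by
      apply fix_sufficient A b hU γ hγ xs hfeas
      · intro i hi
        rw [hval i, hvsupp i (ne_of_gt hi), hws i (ne_of_gt hi), Real.sign_of_pos hi]
        ring
      · intro i hi
        rw [hval i, hvsupp i (ne_of_lt hi), hws i (ne_of_lt hi), Real.sign_of_neg hi]
        ring
      · intro i hi
        rw [hval i]
        rw [abs_mul, abs_of_pos hγ]
        have h1 : |Aᵀ.mulVec w i + t * v i| ≤ |Aᵀ.mulVec w i| + t * |v i| := by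
          refine (abs_add_le _ _).trans ?_
          rw [abs_mul, abs_of_pos ht]
        have h2 := hwz i hi
        have h3 := htv i
        nlinarith
    have heq := hU1 _ _ hf1 hf2
    funext i
    have hieq := congrFun heq i
    simp only [Pi.sub_apply] at hieq
    have h4 := hval i
    have h5 : Aᵀ.mulVec (γ • w) i = γ * Aᵀ.mulVec w i := by
      rw [Matrix.mulVec_smul]; simp
    rw [h5, h4] at hieq
    have : γ * (t * v i) = 0 := by linarith
    rcases mul_eq_zero.mp this with h'|h'
    · exact absurd h' (ne_of_gt hγ)
    · rcases mul_eq_zero.mp h' with h''|h''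
      · exact absurd h'' (ne_of_gt ht)
      · simpa using h''
  · -- backward
    intro hRB y1 y2 h1 h2
    obtain ⟨⟨z, hz⟩, hsupp⟩ := hpart1 y1 y2 h1 h2
    have := hRB (y1 - y2) ⟨z, hz⟩ (fun i hi => by simpa using hsupp i hi)
    exact sub_eq_zero.mp this
end

section
/- If R(y) = 2P(y) - y lies in the set Q = {z : S_γ(z) has sign pattern compatible with x*} (i.e., z_j > γ if x*_j > 0, z_j < -γ if x*_j < 0, |z_j| ≤ γ if x*_j = 0), and y* is a fixed point of T_γ, then T_γ(y) - T_γ(y*) = [(I - B^+B)(I - A^+A) + B^+B A^+A](y - y*). -/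
open Finset Matrix

/-- `z ∈ Q`: the soft-threshold of `z` has the sign pattern of `x*`. -/
def inQ {n : ℕ} (γ : ℝ) (xs z : Fin n → ℝ) : Prop :=
  ∀ j, (0 < xs j → γ < z j) ∧ (xs j < 0 → z j < -γ) ∧ (xs j = 0 → |z j| ≤ γ)

/- ### auxiliary scalar lemmas -/

noncomputable def st (γ z : ℝ) : ℝ := Real.sign z * max (|z| - γ) 0

lemma softThresh_apply {n : ℕ} (γ : ℝ) (w : Fin n → ℝ) (j : Fin n) :
    softThresh γ w j = st γ (w j) := rfl

lemma st_of_abs_le {γ z : ℝ} (h : |z| ≤ γ) : st γ z = 0 := by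
  unfold st
  rw [max_eq_right (by linarith)]
  ring

lemma st_of_gt {γ z : ℝ} (hγ : 0 < γ) (h : γ < z) : st γ z = z - γ := by
  unfold st
  rw [Real.sign_of_pos (by linarith), abs_of_pos (by linarith),
    max_eq_left (by linarith)]
  ring

lemma st_of_lt {γ z : ℝ} (hγ : 0 < γ) (h : z < -γ) : st γ z = z + γ := by
  unfold st
  rw [Real.sign_of_neg (by linarith), abs_of_neg (by linarith),
    max_eq_left (by linarith)]
  ring

/-- subgradient facts for `p = st γ z`, `u = z - p` -/
lemma st_sub (γ z : ℝ) (hγ : 0 < γ) :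
    |z - st γ z| ≤ γ ∧ (z - st γ z) * st γ z = γ * |st γ z| := by
  rcases lt_trichotomy γ z with h | h | h
  · rw [st_of_gt hγ h]
    constructor
    · simp [abs_of_pos hγ]
    · rw [abs_of_pos (by linarith)]; ring
  · rw [st_of_abs_le (by simp [abs_le]; constructor <;> linarith)]
    simp [abs_le]
    constructor <;> linarith
  · rcases le_or_gt (-γ) z with h2 | h2
    · rw [st_of_abs_le (abs_le.2 ⟨h2, le_of_lt h⟩)]
      simp [abs_le]
      constructor <;> linarith
    · rw [st_of_lt hγ h2]
      constructor
      · simp [abs_of_nonneg hγ.le]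
      · rw [abs_of_neg (by linarith)]; ring

/-- if `st γ z = a` then `z` is sign-compatible with `a` -/
lemma inQ_of_st {γ z a : ℝ} (hγ : 0 < γ) (h : st γ z = a) :
    (0 < a → γ < z) ∧ (a < 0 → z < -γ) ∧ (a = 0 → |z| ≤ γ) := by
  rcases lt_trichotomy γ z with h1 | h1 | h1
  · rw [st_of_gt hγ h1] at h
    refine ⟨fun _ => h1, fun ha => absurd ha (by linarith), fun ha => absurd ha (by intro; linarith)⟩
  · have habs : |z| ≤ γ := by rw [← h1]; simp [abs_le]; linarith
    rw [st_of_abs_le habs] at h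
    exact ⟨fun ha => absurd ha (by linarith), fun ha => absurd ha (by linarith), fun _ => habs⟩
  · rcases le_or_gt (-γ) z with h2 | h2
    · have habs : |z| ≤ γ := abs_le.2 ⟨h2, le_of_lt h1⟩
      rw [st_of_abs_le habs] at h
      exact ⟨fun ha => absurd ha (by linarith), fun ha => absurd ha (by linarith), fun _ => habs⟩
    · rw [st_of_lt hγ h2] at h
      refine ⟨fun ha => absurd ha (by linarith), fun _ => h2,
        fun ha => absurd ha (by intro; linarith)⟩

/-- explicit formula for `st` on sign-compatible inputs -/
lemma st_eq_of_compat {γ z a : ℝ} (hγ : 0 < γ)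
    (h1 : 0 < a → γ < z) (h2 : a < 0 → z < -γ) (h3 : a = 0 → |z| ≤ γ) :
    st γ z = if a = 0 then 0 else z - γ * Real.sign a := by
  rcases lt_trichotomy a 0 with h | h | h
  · rw [if_neg (by linarith), st_of_lt hγ (h2 h), Real.sign_of_neg h]; ring
  · rw [if_pos h, st_of_abs_le (h3 h)]
  · rw [if_neg (by linarith), st_of_gt hγ (h1 h), Real.sign_of_pos h]; ring

lemma aat_cancel {m n : ℕ} (A : Matrix (Fin m) (Fin n) ℝ) (hrank : A.rank = m) :
    A * (Aᵀ * (A * Aᵀ)⁻¹) = 1 := by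
  have h1 : (A * Aᵀ).rank = m := by rw [A.rank_self_mul_transpose, hrank]
  have hu : IsUnit (A * Aᵀ) := by
    rw [← Matrix.mulVec_surjective_iff_isUnit]
    have htop : LinearMap.range (A * Aᵀ).mulVecLin = ⊤ := by
      apply Submodule.eq_top_of_finrank_eq
      rw [← Matrix.rank, h1]
      simp [Module.finrank_pi]
    intro v
    exact LinearMap.mem_range.mp (htop ▸ Submodule.mem_top (R := ℝ) (x := v))
  rw [← Matrix.mul_assoc]
  exact Matrix.mul_nonsing_inv _ ((Matrix.isUnit_iff_isUnit_det _).mp hu)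

/-- If `R(y) = 2P(y) - y ∈ Q` and `y*` is a fixed point of `T_γ`, then
`T_γ(y) - T_γ(y*) = [(I - B⁺B)(I - A⁺A) + B⁺B A⁺A](y - y*)`, where `B⁺B` is the
diagonal projection onto coordinates where `x* = 0` and `A⁺A = Aᵀ(AAᵀ)⁻¹A`. -/
theorem stmt7 {m n : ℕ} (A : Matrix (Fin m) (Fin n) ℝ) (b : Fin m → ℝ)
    (hrank : A.rank = m) (γ : ℝ) (hγ : 0 < γ)
    (xs : Fin n → ℝ)
    (hfeas : A.mulVec xs = b)
    (hmin : ∀ x : Fin n → ℝ, A.mulVec x = b → ∑ i, |xs i| ≤ ∑ i, |x i|)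
    (huniq : ∀ x : Fin n → ℝ, A.mulVec x = b → (∑ i, |x i|) = ∑ i, |xs i| → x = xs)
    (y ys : Fin n → ℝ)
    (hy : inQ γ xs ((2 : ℝ) • projAff A b y - y))
    (hfix : DR A b γ ys = ys) :
    DR A b γ y - DR A b γ ys =
      (((1 : Matrix (Fin n) (Fin n) ℝ)
          - Matrix.diagonal (fun j => if xs j = 0 then (1 : ℝ) else 0))
        * ((1 : Matrix (Fin n) (Fin n) ℝ) - (Aᵀ * (A * Aᵀ)⁻¹) * A)
        + Matrix.diagonal (fun j => if xs j = 0 then (1 : ℝ) else 0)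
          * ((Aᵀ * (A * Aᵀ)⁻¹) * A)).mulVec (y - ys) := by
  set K := Aᵀ * (A * Aᵀ)⁻¹ with hK
  have hAK : A * K = 1 := aat_cancel A hrank
  -- projection is feasible
  have hKA : A * (Aᵀ * (A * Aᵀ)⁻¹ * A) = A := by
    rw [← hK, ← Matrix.mul_assoc, hAK, Matrix.one_mul]
  have hPfeas : ∀ w : Fin n → ℝ, A.mulVec (projAff A b w) = b := by
    intro w
    simp [projAff, Matrix.mulVec_add, Matrix.mulVec_mulVec, hAK, hKA, Matrix.one_mulVec,
      Matrix.mulVec_sub, aat_cancel A hrank]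
  set p := projAff A b ys with hp
  set Py := projAff A b y with hPy
  -- the fixed-point equation
  have hst : ∀ j, st γ (2 * p j - ys j) = p j := by
    intro j
    have := congrFun hfix j
    simp only [DR, Pi.add_apply, Pi.sub_apply, Pi.smul_apply, smul_eq_mul,
      softThresh_apply, ← hp] at this
    linarith
  -- subgradient facts: u = p - ys
  have hu : ∀ j, |p j - ys j| ≤ γ ∧ (p j - ys j) * p j = γ * |p j| := by
    intro j
    have h2 : (2 * p j - ys j) - st γ (2 * p j - ys j) = p j - ys j := by
      rw [hst j]; ring
    have := st_sub γ (2 * p j - ys j) hγ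
    rw [h2, hst j] at this
    exact this
  -- orthogonality
  have horth : ∑ j, (p j - ys j) * (xs j - p j) = 0 := by
    have hform : (fun j => p j - ys j) = K.mulVec (b - A.mulVec ys) := by
      funext j
      simp [hp, projAff, Pi.add_apply, hK]
    have hAd : A.mulVec (fun j => xs j - p j) = 0 := by
      have : (fun j => xs j - p j) = xs - p := rfl
      rw [this, Matrix.mulVec_sub, hfeas, hPfeas ys, sub_self]
    calc ∑ j, (p j - ys j) * (xs j - p j)
        = (fun j => p j - ys j) ⬝ᵥ (fun j => xs j - p j) := rfl
      _ = (fun j => xs j - p j) ⬝ᵥ K.mulVec (b - A.mulVec ys) := by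
          rw [hform, dotProduct_comm]
      _ = ((fun j => xs j - p j) ᵥ* K) ⬝ᵥ (b - A.mulVec ys) := by
          rw [Matrix.dotProduct_mulVec]
      _ = 0 := by
          rw [hK, ← Matrix.vecMul_vecMul, Matrix.vecMul_transpose, hAd]
          simp
  -- p is an ℓ¹ minimizer, hence p = xs
  have hple : ∑ j, |p j| ≤ ∑ j, |xs j| := by
    have key : γ * ∑ j, |p j| ≤ γ * ∑ j, |xs j| := by
      rw [Finset.mul_sum, Finset.mul_sum]
      calc ∑ j, γ * |p j| = ∑ j, (p j - ys j) * p j := by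
            exact Finset.sum_congr rfl fun j _ => ((hu j).2).symm
        _ = ∑ j, (p j - ys j) * xs j := by
            have := horth
            have hexp : ∑ j, (p j - ys j) * (xs j - p j)
                = ∑ j, (p j - ys j) * xs j - ∑ j, (p j - ys j) * p j := by
              rw [← Finset.sum_sub_distrib]
              exact Finset.sum_congr rfl fun j _ => by ring
            rw [hexp] at this
            linarith
        _ ≤ ∑ j, γ * |xs j| := by
            apply Finset.sum_le_sum
            intro j _
            calc (p j - ys j) * xs j ≤ |(p j - ys j) * xs j| := le_abs_self _
              _ = |p j - ys j| * |xs j| := abs_mul _ _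
              _ ≤ γ * |xs j| := by
                  apply mul_le_mul_of_nonneg_right (hu j).1 (abs_nonneg _)
    exact le_of_mul_le_mul_left key hγ
  have hpxs : p = xs := huniq p (hPfeas ys) (le_antisymm hple (hmin p (hPfeas ys)))
  -- hence the reflected fixed point is sign compatible
  have hysQ : ∀ j, (0 < xs j → γ < 2 * p j - ys j) ∧ (xs j < 0 → 2 * p j - ys j < -γ)
      ∧ (xs j = 0 → |2 * p j - ys j| ≤ γ) := by
    intro j
    have h : st γ (2 * p j - ys j) = xs j := by
      rw [← congrFun hpxs j]; exact hst j
    exact inQ_of_st hγ h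
  -- difference of projections
  set M := K * A with hM
  set v := y - ys with hv
  have hPdiff : ∀ j, Py j - p j = v j - M.mulVec v j := by
    intro j
    have : Py - p = v - M.mulVec v := by
      simp only [hPy, hp, projAff, hv, hM, Matrix.mulVec_sub, Matrix.mulVec_mulVec]
      abel
    have := congrFun this j
    simpa using this
  -- conclude componentwise
  funext j
  have hRHS : ((1 - Matrix.diagonal (fun j => if xs j = 0 then (1 : ℝ) else 0))
        * (1 - M) + Matrix.diagonal (fun j => if xs j = 0 then (1 : ℝ) else 0) * M).mulVec v j
      = (1 - (if xs j = 0 then (1 : ℝ) else 0)) * (v j - M.mulVec v j)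
        + (if xs j = 0 then (1 : ℝ) else 0) * (M.mulVec v j) := by
    simp only [Matrix.add_mulVec, ← Matrix.mulVec_mulVec, Matrix.sub_mulVec,
      Matrix.one_mulVec, Pi.add_apply, Pi.sub_apply, Matrix.mulVec_diagonal]
    ring
  rw [Pi.sub_apply, hRHS]
  -- expand DR at j
  have hDRy : DR A b γ y j = st γ (2 * Py j - y j) + y j - Py j := by
    simp [DR, softThresh_apply, ← hPy, Pi.smul_apply, Pi.sub_apply, Pi.add_apply]
  have hDRys : DR A b γ ys j = st γ (2 * p j - ys j) + ys j - p j := by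
    simp [DR, softThresh_apply, ← hp, Pi.smul_apply, Pi.sub_apply, Pi.add_apply]
  have hyj := hy j
  have hysj := hysQ j
  simp only [Pi.sub_apply, Pi.smul_apply, smul_eq_mul, ← hPy] at hyj
  have hsty : st γ (2 * Py j - y j)
      = if xs j = 0 then 0 else (2 * Py j - y j) - γ * Real.sign (xs j) :=
    st_eq_of_compat hγ hyj.1 hyj.2.1 hyj.2.2
  have hstys : st γ (2 * p j - ys j)
      = if xs j = 0 then 0 else (2 * p j - ys j) - γ * Real.sign (xs j) :=
    st_eq_of_compat hγ hysj.1 hysj.2.1 hysj.2.2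
  have hd := hPdiff j
  have hvj : v j = y j - ys j := rfl
  rw [hDRy, hDRys, hsty, hstys]
  by_cases hxj : xs j = 0
  · simp only [if_pos hxj]
    rw [hvj] at hd ⊢
    linarith
  · simp only [if_neg hxj]
    rw [hvj] at hd ⊢
    linarith
end

section
/- Let U, V be subspaces of R^n with U ∩ V = {0}, and let P_U, P_V denote the orthogonal projections onto U and V respectively, with P_{U^⊥} = I - P_U, P_{V^⊥} = I - P_V. Then the operator norm of the matrix T = P_V P_U + P_{V^⊥} P_{U^⊥}, restricted to the orthogonal complement of U^⊥ ∩ V^⊥, equals cos θ_1, where θ_1 > 0 is the first (smallest) principal angle between U and V. -/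
open scoped RealInnerProductSpace

/-- The operator `T = P_V P_U + P_{V⊥} P_{U⊥}`. -/
noncomputable def TOper {n : ℕ} (U V : Submodule ℝ (EuclideanSpace ℝ (Fin n)))
    (x : EuclideanSpace ℝ (Fin n)) : EuclideanSpace ℝ (Fin n) :=
  ((Submodule.orthogonalProjectionOnto V
      ((Submodule.orthogonalProjectionOnto U x : EuclideanSpace ℝ (Fin n)))) : EuclideanSpace ℝ (Fin n))
  + ((x - (Submodule.orthogonalProjectionOnto U x : EuclideanSpace ℝ (Fin n)))
      - (Submodule.orthogonalProjectionOnto V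
          (x - (Submodule.orthogonalProjectionOnto U x : EuclideanSpace ℝ (Fin n))) : EuclideanSpace ℝ (Fin n)))

section Aux

variable {n : ℕ} {U V : Submodule ℝ (EuclideanSpace ℝ (Fin n))} {c : ℝ}

/-- Inner product of a vector with its projection equals the squared norm of projection. -/
lemma aux_inner_proj (K : Submodule ℝ (EuclideanSpace ℝ (Fin n)))
    (y : EuclideanSpace ℝ (Fin n)) :
    ⟪y, (Submodule.orthogonalProjectionOnto K y : EuclideanSpace ℝ (Fin n))⟫
      = ‖(Submodule.orthogonalProjectionOnto K y : EuclideanSpace ℝ (Fin n))‖ ^ 2 := by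
  set w : EuclideanSpace ℝ (Fin n) := (Submodule.orthogonalProjectionOnto K y : EuclideanSpace ℝ (Fin n))
  have hwK : w ∈ K := (Submodule.orthogonalProjectionOnto K y).2
  have hsub : y - w ∈ Kᗮ := Submodule.sub_starProjection_mem_orthogonal y
  have h0 : ⟪w, y - w⟫ = 0 := (Submodule.mem_orthogonal K (y - w)).mp hsub w hwK
  rw [inner_sub_right, real_inner_self_eq_norm_sq] at h0
  have : ⟪w, y⟫ = ‖w‖ ^ 2 := by linarith
  rw [real_inner_comm]; exact this

lemma aux_inner_le (hc0 : 0 ≤ c)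
    (hcub : ∀ u ∈ U, ∀ v ∈ V, ‖u‖ = 1 → ‖v‖ = 1 → ⟪u, v⟫ ≤ c)
    {u v : EuclideanSpace ℝ (Fin n)} (hu : u ∈ U) (hv : v ∈ V) :
    ⟪u, v⟫ ≤ c * (‖u‖ * ‖v‖) := by
  rcases eq_or_ne u 0 with rfl | hu0
  · simp
  rcases eq_or_ne v 0 with rfl | hv0
  · simp
  have hun : (0:ℝ) < ‖u‖ := norm_pos_iff.mpr hu0
  have hvn : (0:ℝ) < ‖v‖ := norm_pos_iff.mpr hv0
  have h := hcub (‖u‖⁻¹ • u) (U.smul_mem _ hu) (‖v‖⁻¹ • v) (V.smul_mem _ hv)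
    (by rw [norm_smul, norm_inv, norm_norm, inv_mul_cancel₀ hun.ne'])
    (by rw [norm_smul, norm_inv, norm_norm, inv_mul_cancel₀ hvn.ne'])
  rw [real_inner_smul_left, real_inner_smul_right] at h
  have hpos : (0:ℝ) < ‖u‖ * ‖v‖ := by positivity
  have h2 : (‖u‖ * ‖v‖) * (‖u‖⁻¹ * (‖v‖⁻¹ * ⟪u, v⟫)) ≤ (‖u‖ * ‖v‖) * c :=
    mul_le_mul_of_nonneg_left h hpos.le
  have h3 : (‖u‖ * ‖v‖) * (‖u‖⁻¹ * (‖v‖⁻¹ * ⟪u, v⟫)) = ⟪u, v⟫ := by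
    field_simp
  linarith [h2, h3.symm.le, h3.le]

lemma aux_proj_le (hc0 : 0 ≤ c)
    (hcub : ∀ u ∈ U, ∀ v ∈ V, ‖u‖ = 1 → ‖v‖ = 1 → ⟪u, v⟫ ≤ c)
    {u : EuclideanSpace ℝ (Fin n)} (hu : u ∈ U) :
    ‖(Submodule.orthogonalProjectionOnto V u : EuclideanSpace ℝ (Fin n))‖ ≤ c * ‖u‖ := by
  set w : EuclideanSpace ℝ (Fin n) := (Submodule.orthogonalProjectionOnto V u : EuclideanSpace ℝ (Fin n))
  have hwV : w ∈ V := (Submodule.orthogonalProjectionOnto V u).2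
  have h1 : ⟪u, w⟫ = ‖w‖ ^ 2 := aux_inner_proj V u
  have h2 : ⟪u, w⟫ ≤ c * (‖u‖ * ‖w‖) := aux_inner_le hc0 hcub hu hwV
  rcases eq_or_lt_of_le (norm_nonneg w) with h0 | h0
  · rw [← h0]; positivity
  · nlinarith [h1, h2, h0]

lemma aux_lower (hc0 : 0 ≤ c) (hc1 : c < 1)
    (hcub : ∀ u ∈ U, ∀ v ∈ V, ‖u‖ = 1 → ‖v‖ = 1 → ⟪u, v⟫ ≤ c)
    {b : EuclideanSpace ℝ (Fin n)} (hb : b ∈ Uᗮ) (hb2 : b ∈ U ⊔ V) :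
    (1 - c ^ 2) * ‖b‖ ^ 2
      ≤ ‖(Submodule.orthogonalProjectionOnto V b : EuclideanSpace ℝ (Fin n))‖ ^ 2 := by
  obtain ⟨u, hu, v, hv, hbe⟩ := Submodule.mem_sup.mp hb2
  set w : EuclideanSpace ℝ (Fin n) := (Submodule.orthogonalProjectionOnto V b : EuclideanSpace ℝ (Fin n))
  have hwV : w ∈ V := (Submodule.orthogonalProjectionOnto V b).2
  -- ‖b‖² = ⟪b, v⟫
  have hbu : ⟪u, b⟫ = 0 := (Submodule.mem_orthogonal U b).mp hb u hu
  have h1 : ‖b‖ ^ 2 = ⟪b, v⟫ := by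
    have key : ⟪b, b⟫ = ⟪b, u⟫ + ⟪b, v⟫ := by rw [← inner_add_right, hbe]
    have hbu' : ⟪b, u⟫ = 0 := by rw [real_inner_comm]; exact hbu
    rw [real_inner_self_eq_norm_sq, hbu'] at key
    linarith
  -- ⟪b, v⟫ = ⟪w, v⟫ ≤ ‖w‖ ‖v‖
  have hsub : b - w ∈ Vᗮ := Submodule.sub_starProjection_mem_orthogonal b
  have h2 : ⟪b - w, v⟫ = 0 := by
    have := (Submodule.mem_orthogonal V (b - w)).mp hsub v hv
    rw [real_inner_comm]; exact this
  have h3 : ⟪b, v⟫ = ⟪w, v⟫ := by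
    rw [inner_sub_left] at h2; linarith
  have h4 : ‖b‖ ^ 2 ≤ ‖w‖ * ‖v‖ := by
    rw [h1, h3]; exact real_inner_le_norm w v
  -- (1 - c²) ‖v‖² ≤ ‖b‖²
  have huv : ⟪u, -v⟫ ≤ c * (‖u‖ * ‖v‖) := by
    have := aux_inner_le hc0 hcub hu (V.neg_mem hv)
    rwa [norm_neg] at this
  have h5 : (1 - c ^ 2) * ‖v‖ ^ 2 ≤ ‖b‖ ^ 2 := by
    have hbn : ‖b‖ ^ 2 = ‖u‖ ^ 2 + 2 * ⟪u, v⟫ + ‖v‖ ^ 2 := by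
      rw [← hbe, norm_add_sq_real]
    rw [inner_neg_right] at huv
    nlinarith [sq_nonneg (‖u‖ - c * ‖v‖), huv, hbn]
  -- combine
  rcases eq_or_lt_of_le (norm_nonneg b) with hb0 | hb0
  · rw [← hb0]; linarith [sq_nonneg ‖w‖]
  have hc2 : (0:ℝ) < 1 - c ^ 2 := by nlinarith
  have h6 : ‖b‖ ^ 2 * ‖b‖ ^ 2 ≤ ‖w‖ ^ 2 * ‖v‖ ^ 2 := by
    nlinarith [h4, norm_nonneg w, norm_nonneg v, sq_nonneg (‖b‖)]
  have h7 : (1 - c ^ 2) * (‖b‖ ^ 2 * ‖b‖ ^ 2) ≤ ‖w‖ ^ 2 * ‖b‖ ^ 2 := by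
    have e1 := mul_le_mul_of_nonneg_left h6 hc2.le
    have e2 := mul_le_mul_of_nonneg_left h5 (sq_nonneg ‖w‖)
    nlinarith [e1, e2]
  have hbsq : (0:ℝ) < ‖b‖ ^ 2 := by positivity
  nlinarith [h7, hbsq]

end Aux

/-- If `U ∩ V = {0}`, the operator norm of `T = P_V P_U + P_{V⊥} P_{U⊥}` restricted to
the orthogonal complement of `U⊥ ∩ V⊥` equals `cos θ₁ < 1`, where `θ₁` is the first
principal angle between `U` and `V`, i.e. `cos θ₁` is the maximum of `⟪u, v⟫` over
unit vectors `u ∈ U`, `v ∈ V`. -/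
theorem stmt8 {n : ℕ} (U V : Submodule ℝ (EuclideanSpace ℝ (Fin n)))
    (hUV : U ⊓ V = ⊥) (hU : U ≠ ⊥) (hV : V ≠ ⊥)
    (c : ℝ)
    (hc : IsGreatest {t : ℝ | ∃ u ∈ U, ∃ v ∈ V, ‖u‖ = 1 ∧ ‖v‖ = 1 ∧ t = ⟪u, v⟫} c) :
    c < 1 ∧
    (∀ x ∈ (Uᗮ ⊓ Vᗮ)ᗮ, ‖TOper U V x‖ ≤ c * ‖x‖) ∧
    (∃ x ∈ (Uᗮ ⊓ Vᗮ)ᗮ, ‖x‖ = 1 ∧ ‖TOper U V x‖ = c) := by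
  have hcub : ∀ u ∈ U, ∀ v ∈ V, ‖u‖ = 1 → ‖v‖ = 1 → ⟪u, v⟫ ≤ c := by
    intro u hu v hv h1 h2
    exact hc.2 ⟨u, hu, v, hv, h1, h2, rfl⟩
  obtain ⟨u₁, hu₁, v₁, hv₁, hnu₁, hnv₁, hcuv⟩ := hc.1
  have hc0 : 0 ≤ c := by
    have h2 := hcub u₁ hu₁ (-v₁) (V.neg_mem hv₁) hnu₁ (by rw [norm_neg]; exact hnv₁)
    rw [inner_neg_right] at h2
    linarith [hcuv.le, hcuv.ge]
  have hc1 : c < 1 := by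
    have hle : c ≤ 1 := by
      have h := real_inner_le_norm u₁ v₁
      rw [hnu₁, hnv₁] at h
      rw [hcuv]; linarith
    rcases hle.lt_or_eq with h | h
    · exact h
    · exfalso
      have hsq : ‖u₁ - v₁‖ ^ 2 = 0 := by
        rw [norm_sub_sq_real, hnu₁, hnv₁, ← hcuv, h]; ring
      have huv : u₁ = v₁ := by
        have h0 : ‖u₁ - v₁‖ = 0 := by nlinarith [hsq, norm_nonneg (u₁ - v₁)]
        exact sub_eq_zero.mp (norm_eq_zero.mp h0)
      have hmem : u₁ ∈ U ⊓ V := ⟨hu₁, huv ▸ hv₁⟩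
      rw [hUV, Submodule.mem_bot] at hmem
      rw [hmem, norm_zero] at hnu₁
      exact one_ne_zero hnu₁.symm
  have hW : (Uᗮ ⊓ Vᗮ)ᗮ = U ⊔ V := by
    rw [Submodule.inf_orthogonal, Submodule.orthogonal_orthogonal]
  refine ⟨hc1, ?_, ?_⟩
  · -- the bound
    intro x hx
    have hxUV : x ∈ U ⊔ V := hW ▸ hx
    set a : EuclideanSpace ℝ (Fin n) := (Submodule.orthogonalProjectionOnto U x : EuclideanSpace ℝ (Fin n))
      with ha
    set b : EuclideanSpace ℝ (Fin n) := x - a with hbdef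
    have haU : a ∈ U := (Submodule.orthogonalProjectionOnto U x).2
    have hbU : b ∈ Uᗮ := Submodule.sub_starProjection_mem_orthogonal x
    have hbUV : b ∈ U ⊔ V := Submodule.sub_mem _ hxUV (Submodule.mem_sup_left haU)
    set w₁ : EuclideanSpace ℝ (Fin n) := (Submodule.orthogonalProjectionOnto V a : EuclideanSpace ℝ (Fin n))
    set p : EuclideanSpace ℝ (Fin n) := (Submodule.orthogonalProjectionOnto V b : EuclideanSpace ℝ (Fin n))
    set w₂ : EuclideanSpace ℝ (Fin n) := b - p with hw₂def
    have hT : TOper U V x = w₁ + w₂ := rfl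
    have hw₁ : w₁ ∈ V := (Submodule.orthogonalProjectionOnto V a).2
    have hw₂ : w₂ ∈ Vᗮ := Submodule.sub_starProjection_mem_orthogonal b
    have horth : ⟪w₁, w₂⟫ = 0 := (Submodule.mem_orthogonal V w₂).mp hw₂ w₁ hw₁
    have hns : ‖TOper U V x‖ ^ 2 = ‖w₁‖ ^ 2 + ‖w₂‖ ^ 2 := by
      rw [hT, norm_add_sq_real, horth]; ring
    have h1 : ‖w₁‖ ≤ c * ‖a‖ := aux_proj_le hc0 hcub haU
    have h2 : ‖w₂‖ ^ 2 = ‖b‖ ^ 2 - ‖p‖ ^ 2 := by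
      have hip : ⟪b, p⟫ = ‖p‖ ^ 2 := aux_inner_proj V b
      rw [hw₂def, norm_sub_sq_real, hip]; ring
    have h3 : (1 - c ^ 2) * ‖b‖ ^ 2 ≤ ‖p‖ ^ 2 := aux_lower hc0 hc1 hcub hbU hbUV
    have hab : ⟪a, b⟫ = 0 := (Submodule.mem_orthogonal U b).mp hbU a haU
    have hx2 : ‖x‖ ^ 2 = ‖a‖ ^ 2 + ‖b‖ ^ 2 := by
      have hxe : x = a + b := by rw [hbdef]; abel
      rw [hxe, norm_add_sq_real, hab]; ring
    have h1sq : ‖w₁‖ ^ 2 ≤ (c * ‖a‖) ^ 2 := by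
      have : (0:ℝ) ≤ ‖w₁‖ := norm_nonneg _
      nlinarith [h1, this]
    have hsq : ‖TOper U V x‖ ^ 2 ≤ (c * ‖x‖) ^ 2 := by
      have : (c * ‖x‖) ^ 2 = c ^ 2 * (‖a‖ ^ 2 + ‖b‖ ^ 2) := by rw [mul_pow, hx2]
      rw [this, hns]
      nlinarith [h1sq, h2, h3]
    have := Real.sqrt_le_sqrt hsq
    rwa [Real.sqrt_sq (norm_nonneg _), Real.sqrt_sq (by positivity)] at this
  · -- the witness
    refine ⟨u₁, ?_, hnu₁, ?_⟩
    · rw [hW]; exact Submodule.mem_sup_left hu₁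
    have hPu : (Submodule.orthogonalProjectionOnto U u₁ : EuclideanSpace ℝ (Fin n)) = u₁ :=
      Submodule.starProjection_eq_self_iff.mpr hu₁
    have hTu : TOper U V u₁ = (Submodule.orthogonalProjectionOnto V u₁ : EuclideanSpace ℝ (Fin n)) := by
      unfold TOper
      rw [hPu]
      simp
    set w : EuclideanSpace ℝ (Fin n) := (Submodule.orthogonalProjectionOnto V u₁ : EuclideanSpace ℝ (Fin n))
    have hwle : ‖w‖ ≤ c := by
      have := aux_proj_le hc0 hcub hu₁
      rwa [hnu₁, mul_one] at this
    have hwge : c ≤ ‖w‖ := by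
      have hsub : u₁ - w ∈ Vᗮ := Submodule.sub_starProjection_mem_orthogonal u₁
      have h0 : ⟪u₁ - w, v₁⟫ = 0 := by
        have := (Submodule.mem_orthogonal V (u₁ - w)).mp hsub v₁ hv₁
        rw [real_inner_comm]; exact this
      have h1 : ⟪u₁, v₁⟫ = ⟪w, v₁⟫ := by
        rw [inner_sub_left] at h0; linarith
      have h2 : ⟪w, v₁⟫ ≤ ‖w‖ * ‖v₁‖ := real_inner_le_norm w v₁
      rw [hnv₁, mul_one] at h2
      rw [hcuv, h1]; exact h2
    rw [hTu]
    exact le_antisymm hwle hwge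
end

section
/- Suppose the orthogonal matrix decomposition T = P_V P_U + P_{V^⊥} P_{U^⊥} holds with U ∩ V = {0}, U = N(A), V = N(B). If the iterates y^k of the Douglas–Rachford iteration eventually satisfy R(y^k) ∈ Q for all k ≥ K and P_{R(A^T) ∩ R(B^T)}(y^K - y*) = 0, then ||y^k - y*|| ≤ (cos θ_1)^{k-K} ||y^K - y*|| for all k > K, where θ_1 is the first principal angle between N(A) and N(B). -/
open Finset Matrix
open RealInnerProductSpace

section Abstract
variable {E : Type*} [NormedAddCommGroup E] [InnerProductSpace ℝ E] [FiniteDimensional ℝ E]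

noncomputable abbrev orthogonalProjection (K : Submodule ℝ E) [K.HasOrthogonalProjection] :
    E →L[ℝ] K := K.orthogonalProjectionOnto

lemma orthogonalProjection_orthogonal_val {K : Submodule ℝ E} [K.HasOrthogonalProjection]
    (u : E) : (orthogonalProjection Kᗮ u : E) = u - (orthogonalProjection K u : E) :=
  Submodule.starProjection_orthogonal_val (K := K) u

lemma orthogonalProjection_inner_eq_zero {K : Submodule ℝ E} [K.HasOrthogonalProjection]
    (v w : E) (hw : w ∈ K) : ⟪v - (orthogonalProjection K v : E), w⟫ = 0 :=
  Submodule.starProjection_inner_eq_zero (K := K) v w hw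

lemma sub_orthogonalProjection_mem_orthogonal {K : Submodule ℝ E} [K.HasOrthogonalProjection]
    (v : E) : v - (orthogonalProjection K v : E) ∈ Kᗮ :=
  Submodule.sub_starProjection_mem_orthogonal (K := K) v

lemma eq_orthogonalProjection_of_mem_orthogonal {K : Submodule ℝ E} [K.HasOrthogonalProjection]
    {u v : E} (hv : v ∈ K) (hvo : u - v ∈ Kᗮ) : (orthogonalProjection K u : E) = v :=
  Submodule.eq_starProjection_of_mem_orthogonal (K := K) hv hvo

lemma orthogonalProjection_eq_self_iff {K : Submodule ℝ E} [K.HasOrthogonalProjection]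
    {v : E} : (orthogonalProjection K v : E) = v ↔ v ∈ K :=
  Submodule.starProjection_eq_self_iff (K := K)


lemma pyth (S : Submodule ℝ E) (x : E) :
    ‖x‖ ^ 2 = ‖(orthogonalProjection S x : E)‖ ^ 2 + ‖(orthogonalProjection Sᗮ x : E)‖ ^ 2 := by
  rw [orthogonalProjection_orthogonal_val]
  set p := (orthogonalProjection S x : E) with hp
  have h : ⟪p, x - p⟫ = 0 := by
    rw [real_inner_comm]
    exact orthogonalProjection_inner_eq_zero x p (orthogonalProjection S x).2
  have h2 := norm_add_sq_real p (x - p)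
  have h3 : p + (x - p) = x := by abel
  rw [h3, h] at h2
  linarith

lemma projBound {U V : Submodule ℝ E} {c : ℝ} (hc0 : 0 ≤ c)
    (hub : ∀ u ∈ U, ∀ v ∈ V, ⟪u, v⟫ ≤ c * (‖u‖ * ‖v‖)) {u : E} (hu : u ∈ U) :
    ‖(orthogonalProjection V u : E)‖ ≤ c * ‖u‖ := by
  set p := (orthogonalProjection V u : E) with hp
  have hpV : p ∈ V := (orthogonalProjection V u).2
  have h1 : ⟪u - p, p⟫ = 0 := orthogonalProjection_inner_eq_zero u p hpV
  have h2 : ‖p‖ ^ 2 = ⟪u, p⟫ := by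
    rw [inner_sub_left] at h1
    have h4 : ⟪p, p⟫ = ‖p‖ ^ 2 := real_inner_self_eq_norm_sq p
    linarith
  have h3 : ⟪u, p⟫ ≤ c * (‖u‖ * ‖p‖) := hub u hu p hpV
  rcases eq_or_lt_of_le (norm_nonneg p) with h0 | h0
  · rw [← h0]; positivity
  · nlinarith

lemma projSurj {U V : Submodule ℝ E} (hUV : U ⊓ V = ⊥) {b : E}
    (hbU : b ∈ Uᗮ) (hbW : b ∈ (Uᗮ ⊓ Vᗮ)ᗮ) :
    ∃ v ∈ V, (orthogonalProjection Uᗮ v : E) = b := by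
  set f : E →ₗ[ℝ] E := Uᗮ.subtype.comp (orthogonalProjection Uᗮ).toLinearMap with hf
  have hfapp : ∀ v : E, f v = (orthogonalProjection Uᗮ v : E) := fun v => rfl
  have hsub : ∀ v : E, v - f v ∈ U := by
    intro v
    have h5 := orthogonalProjection_orthogonal_val (K := U) v
    rw [hfapp, h5]
    have h6 : v - (v - (orthogonalProjection U v : E)) = (orthogonalProjection U v : E) := by abel
    rw [h6]
    exact (orthogonalProjection U v).2
  set R : Submodule ℝ E := V.map f with hR
  set S : Submodule ℝ E := Uᗮ ⊓ (Uᗮ ⊓ Vᗮ)ᗮ with hS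
  have hRS : R ≤ S := by
    rintro x ⟨v, hv, rfl⟩
    refine ⟨(orthogonalProjection Uᗮ v).2, ?_⟩
    show f v ∈ (Uᗮ ⊓ Vᗮ)ᗮ
    intro z hz
    obtain ⟨hzU, hzV⟩ := hz
    have h1 : ⟪z, v - f v⟫ = 0 := by
      rw [real_inner_comm]
      exact (Submodule.mem_orthogonal _ _).1 hzU _ (hsub v)
    have h2 : ⟪z, v⟫ = 0 := by
      rw [real_inner_comm]
      exact (Submodule.mem_orthogonal _ _).1 hzV _ hv
    have h3 : ⟪z, f v⟫ = ⟪z, v⟫ - ⟪z, v - f v⟫ := by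
      rw [inner_sub_right]; ring
    rw [h3, h1, h2]; ring
  have hbot : Rᗮ ⊓ S = ⊥ := by
    rw [Submodule.eq_bot_iff]
    rintro x ⟨hxR, hxU, hxW⟩
    have hxV : x ∈ Vᗮ := by
      intro v hv
      have h1 : ⟪f v, x⟫ = 0 := (Submodule.mem_orthogonal _ _).1 hxR _ ⟨v, hv, rfl⟩
      have h2 : ⟪v - f v, x⟫ = 0 := (Submodule.mem_orthogonal _ _).1 hxU _ (hsub v)
      have h3 : ⟪v, x⟫ = ⟪v - f v, x⟫ + ⟪f v, x⟫ := by
        rw [inner_sub_left]; ring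
      rw [h3, h1, h2]; ring
    have hxWW : x ∈ Uᗮ ⊓ Vᗮ := ⟨hxU, hxV⟩
    have := (Submodule.mem_orthogonal _ _).1 hxW x hxWW
    exact inner_self_eq_zero.1 this
  have key : R = S := by
    have h := Submodule.sup_orthogonal_inf_of_hasOrthogonalProjection hRS
    rw [hbot] at h
    simpa using h
  have hbS : b ∈ S := ⟨hbU, hbW⟩
  rw [← key] at hbS
  obtain ⟨v, hv, hfv⟩ := hbS
  exact ⟨v, hv, hfv⟩

lemma dualBound {U V : Submodule ℝ E} {c : ℝ} (hc0 : 0 ≤ c) (hc1 : c ≤ 1)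
    (hUV : U ⊓ V = ⊥)
    (hub : ∀ v ∈ V, ∀ u ∈ U, ⟪v, u⟫ ≤ c * (‖v‖ * ‖u‖)) {b : E}
    (hbU : b ∈ Uᗮ) (hbW : b ∈ (Uᗮ ⊓ Vᗮ)ᗮ) :
    (1 - c ^ 2) * ‖b‖ ^ 2 ≤ ‖(orthogonalProjection V b : E)‖ ^ 2 := by
  obtain ⟨v, hvV, hPv⟩ := projSurj hUV hbU hbW
  by_cases hb0 : b = 0
  · simp [hb0]
  have hPU : ‖(orthogonalProjection U v : E)‖ ≤ c * ‖v‖ := projBound hc0 hub hvV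
  have hv2 : (1 - c ^ 2) * ‖v‖ ^ 2 ≤ ‖b‖ ^ 2 := by
    have hp := pyth U v
    rw [hPv] at hp
    nlinarith [norm_nonneg (orthogonalProjection U v : E), norm_nonneg v]
  have h1 : ⟪b, v⟫ = ‖b‖ ^ 2 := by
    have hz : v - (orthogonalProjection Uᗮ v : E) ∈ Uᗮᗮ :=
      sub_orthogonalProjection_mem_orthogonal (K := Uᗮ) v
    have h0 : ⟪b, v - (orthogonalProjection Uᗮ v : E)⟫ = 0 :=
      (Submodule.mem_orthogonal _ _).1 hz b hbU
    have h4 : ⟪b, v⟫ = ⟪b, v - (orthogonalProjection Uᗮ v : E)⟫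
        + ⟪b, (orthogonalProjection Uᗮ v : E)⟫ := by
      rw [inner_sub_right]; ring
    rw [h4, h0, hPv, real_inner_self_eq_norm_sq]; ring
  set q := (orthogonalProjection V b : E) with hq
  have h2 : ‖b‖ ^ 2 ≤ ‖q‖ * ‖v‖ := by
    have hbq : ⟪b - q, v⟫ = 0 := orthogonalProjection_inner_eq_zero b v hvV
    have h5 : ⟪q, v⟫ = ‖b‖ ^ 2 := by
      rw [inner_sub_left] at hbq
      linarith
    calc ‖b‖ ^ 2 = ⟪q, v⟫ := h5.symm
      _ ≤ ‖q‖ * ‖v‖ := real_inner_le_norm q v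
  have hbpos : 0 < ‖b‖ := norm_pos_iff.2 hb0
  have hs : 0 ≤ 1 - c ^ 2 := by nlinarith
  have h3 : ‖b‖ ^ 2 * ‖b‖ ^ 2 ≤ (‖q‖ * ‖v‖) * (‖q‖ * ‖v‖) :=
    mul_le_mul h2 h2 (by positivity) (by positivity)
  have h4 : (1 - c ^ 2) * (‖b‖ ^ 2 * ‖b‖ ^ 2) ≤ ‖q‖ ^ 2 * ‖b‖ ^ 2 := by
    calc (1 - c ^ 2) * (‖b‖ ^ 2 * ‖b‖ ^ 2) ≤ (1 - c ^ 2) * ((‖q‖ * ‖v‖) * (‖q‖ * ‖v‖)) :=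
          mul_le_mul_of_nonneg_left h3 hs
      _ = ‖q‖ ^ 2 * ((1 - c ^ 2) * ‖v‖ ^ 2) := by ring
      _ ≤ ‖q‖ ^ 2 * ‖b‖ ^ 2 := mul_le_mul_of_nonneg_left hv2 (by positivity)
  have hb2 : 0 < ‖b‖ ^ 2 := by positivity
  refine le_of_mul_le_mul_right ?_ hb2
  calc (1 - c ^ 2) * ‖b‖ ^ 2 * ‖b‖ ^ 2 = (1 - c ^ 2) * (‖b‖ ^ 2 * ‖b‖ ^ 2) := by ring
    _ ≤ ‖q‖ ^ 2 * ‖b‖ ^ 2 := h4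



lemma stepBound {U V : Submodule ℝ E} {c : ℝ} (hc0 : 0 ≤ c) (hc1 : c ≤ 1)
    (hUV : U ⊓ V = ⊥)
    (hub : ∀ u ∈ U, ∀ v ∈ V, ⟪u, v⟫ ≤ c * (‖u‖ * ‖v‖))
    (hub' : ∀ v ∈ V, ∀ u ∈ U, ⟪v, u⟫ ≤ c * (‖v‖ * ‖u‖))
    {w : E} (hw : w ∈ (Uᗮ ⊓ Vᗮ)ᗮ) :
    ‖(orthogonalProjection V (orthogonalProjection U w) : E)
      + (orthogonalProjection Vᗮ (orthogonalProjection Uᗮ w) : E)‖ ≤ c * ‖w‖ ∧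
    ((orthogonalProjection V (orthogonalProjection U w) : E)
      + (orthogonalProjection Vᗮ (orthogonalProjection Uᗮ w) : E)) ∈ (Uᗮ ⊓ Vᗮ)ᗮ := by
  set a := (orthogonalProjection U w : E) with ha
  set b := (orthogonalProjection Uᗮ w : E) with hb
  set p := (orthogonalProjection V a : E) with hp
  set q := (orthogonalProjection Vᗮ b : E) with hq
  have hbval : b = w - a := orthogonalProjection_orthogonal_val w
  have hbU : b ∈ Uᗮ := (orthogonalProjection Uᗮ w).2
  have haU : a ∈ U := (orthogonalProjection U w).2
  have hpV : p ∈ V := (orthogonalProjection V a).2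
  have hqV : q ∈ Vᗮ := (orthogonalProjection Vᗮ b).2
  have hqval : q = b - (orthogonalProjection V b : E) := orthogonalProjection_orthogonal_val b
  -- b is orthogonal to W
  have hbW : b ∈ (Uᗮ ⊓ Vᗮ)ᗮ := by
    intro z hz
    obtain ⟨hzU, hzV⟩ := hz
    have h1 : ⟪z, a⟫ = 0 := by
      rw [real_inner_comm]; exact (Submodule.mem_orthogonal _ _).1 hzU _ haU
    have h2 : ⟪z, w⟫ = 0 := (Submodule.mem_orthogonal _ _).1 hw z ⟨hzU, hzV⟩
    have : ⟪z, b⟫ = ⟪z, w⟫ - ⟪z, a⟫ := by rw [hbval, inner_sub_right]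
    rw [this, h1, h2]; ring
  constructor
  · -- norm bound
    have hinner : ⟪p, q⟫ = 0 := (Submodule.mem_orthogonal _ _).1 hqV _ hpV
    have hnorm2 : ‖p + q‖ ^ 2 = ‖p‖ ^ 2 + ‖q‖ ^ 2 := by
      rw [norm_add_sq_real, hinner]; ring
    have h1 : ‖p‖ ≤ c * ‖a‖ := projBound hc0 hub haU
    have h2 : ‖q‖ ^ 2 ≤ c ^ 2 * ‖b‖ ^ 2 := by
      have hpyV := pyth V b
      have hd := dualBound hc0 hc1 hUV hub' hbU hbW
      nlinarith
    have h3 : ‖w‖ ^ 2 = ‖a‖ ^ 2 + ‖b‖ ^ 2 := pyth U w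
    have h4 : ‖p + q‖ ^ 2 ≤ (c * ‖w‖) ^ 2 := by nlinarith [norm_nonneg a, norm_nonneg p]
    have h5 : 0 ≤ c * ‖w‖ := by positivity
    nlinarith [norm_nonneg (p + q)]
  · -- membership
    intro z hz
    obtain ⟨hzU, hzV⟩ := hz
    have h1 : ⟪z, p⟫ = 0 := by
      rw [real_inner_comm]; exact (Submodule.mem_orthogonal _ _).1 hzV _ hpV
    have h2 : ⟪z, b⟫ = 0 := (Submodule.mem_orthogonal _ _).1 hbW z ⟨hzU, hzV⟩
    have h3 : ⟪z, (orthogonalProjection V b : E)⟫ = 0 := by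
      rw [real_inner_comm]
      exact (Submodule.mem_orthogonal _ _).1 hzV _ (orthogonalProjection V b).2
    have h4 : ⟪z, q⟫ = 0 := by
      rw [hqval, inner_sub_right, h2, h3]; ring
    rw [inner_add_right, h1, h4]; ring
end Abstract

/-- The error-propagation matrix `T = (I - B⁺B)(I - A⁺A) + B⁺B A⁺A` for
Douglas-Rachford on basis pursuit, where `B⁺B` is the diagonal projection onto
the coordinates where `x* = 0` and `A⁺A = Aᵀ(AAᵀ)⁻¹A`. -/
noncomputable def errMat {m n : ℕ} (A : Matrix (Fin m) (Fin n) ℝ) (xs : Fin n → ℝ) :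
    Matrix (Fin n) (Fin n) ℝ :=
  ((1 : Matrix (Fin n) (Fin n) ℝ)
      - Matrix.diagonal (fun j => if xs j = 0 then (1 : ℝ) else 0))
    * ((1 : Matrix (Fin n) (Fin n) ℝ) - (Aᵀ * (A * Aᵀ)⁻¹) * A)
  + Matrix.diagonal (fun j => if xs j = 0 then (1 : ℝ) else 0)
    * ((Aᵀ * (A * Aᵀ)⁻¹) * A)

/-- If eventually the Douglas–Rachford error propagates linearly via
`y^{k+1} - y* = T(y^k - y*)` and `y^K - y*` is orthogonal to `R(Aᵀ) ∩ R(Bᵀ)`,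
then `‖y^k - y*‖ ≤ (cos θ₁)^{k-K} ‖y^K - y*‖` for all `k > K`, where `θ₁` is the
first principal angle between `N(A)` and `N(B)`. -/
theorem stmt10 {m n : ℕ} (A : Matrix (Fin m) (Fin n) ℝ) (hrank : A.rank = m)
    (xs : Fin n → ℝ)
    (htriv : ∀ z : Fin n → ℝ, A.mulVec z = 0 → (∀ i, xs i = 0 → z i = 0) → z = 0)
    (c : ℝ)
    (hc : IsGreatest {t : ℝ | ∃ u v : Fin n → ℝ, A.mulVec u = 0 ∧
      (∀ i, xs i = 0 → v i = 0) ∧ (∑ i, u i ^ 2) = 1 ∧ (∑ i, v i ^ 2) = 1 ∧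
      t = ∑ i, u i * v i} c)
    (y : ℕ → Fin n → ℝ) (ys : Fin n → ℝ) (K : ℕ)
    (hiter : ∀ k, K ≤ k → y (k+1) - ys = (errMat A xs).mulVec (y k - ys))
    (hproj : ∀ v : Fin n → ℝ, (∃ z : Fin m → ℝ, v = Aᵀ.mulVec z) →
      (∀ i, xs i ≠ 0 → v i = 0) → (∑ i, (y K i - ys i) * v i) = 0) :
    ∀ k, K < k →
      Real.sqrt (∑ i, (y k i - ys i) ^ 2)
        ≤ c ^ (k - K) * Real.sqrt (∑ i, (y K i - ys i) ^ 2) := by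
  classical
  set Dg : Matrix (Fin n) (Fin n) ℝ :=
    Matrix.diagonal (fun j => if xs j = 0 then (1 : ℝ) else 0) with hDgdef
  set Q : Matrix (Fin n) (Fin n) ℝ := (Aᵀ * (A * Aᵀ)⁻¹) * A with hQdef
  set mulE : Matrix (Fin n) (Fin n) ℝ → EuclideanSpace ℝ (Fin n) → EuclideanSpace ℝ (Fin n) :=
    fun M z => (WithLp.equiv 2 (Fin n → ℝ)).symm (M.mulVec (WithLp.equiv 2 (Fin n → ℝ) z))
    with hmulE
  -- ### invertibility of A * Aᵀ
  have hAt_ker : ∀ z : Fin m → ℝ, Aᵀ.mulVec z = 0 → z = 0 := by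
    have h2 : Aᵀ.rank = m := by rw [Matrix.rank_transpose]; exact hrank
    have h1 := LinearMap.finrank_range_add_finrank_ker (Aᵀ.mulVecLin)
    have h3 : Module.finrank ℝ (LinearMap.range Aᵀ.mulVecLin) = m := h2
    have h4 : Module.finrank ℝ (Fin m → ℝ) = m := by
      simp [Module.finrank_fintype_fun_eq_card]
    have h5 : Module.finrank ℝ (LinearMap.ker Aᵀ.mulVecLin) = 0 := by omega
    have h6 : LinearMap.ker Aᵀ.mulVecLin = ⊥ := Submodule.finrank_eq_zero.1 h5
    intro z hz
    have : z ∈ LinearMap.ker Aᵀ.mulVecLin :=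
      LinearMap.mem_ker.2 (by rw [Matrix.mulVecLin_apply]; exact hz)
    rw [h6] at this
    simpa using this
  have hAAt : IsUnit (A * Aᵀ) := by
    rw [← Matrix.mulVec_injective_iff_isUnit]
    have : ∀ z : Fin m → ℝ, (A * Aᵀ).mulVec z = 0 → z = 0 := by
      intro z hz
      have h0 : (Aᵀ.mulVec z) ⬝ᵥ (Aᵀ.mulVec z) = 0 := by
        have e1 : z ⬝ᵥ ((A * Aᵀ).mulVec z) = (Aᵀ.mulVec z) ⬝ᵥ (Aᵀ.mulVec z) := by
          rw [← Matrix.mulVec_mulVec, Matrix.dotProduct_mulVec, ← Matrix.mulVec_transpose]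
        rw [← e1, hz, dotProduct_zero]
      exact hAt_ker z (dotProduct_self_eq_zero.1 h0)
    intro z1 z2 hz
    have := sub_eq_zero.2 hz
    rw [← Matrix.mulVec_sub] at this
    have := this  -- (A*Aᵀ) *ᵥ (z1 - z2) = 0
    have h7 := ‹∀ z : Fin m → ℝ, (A * Aᵀ).mulVec z = 0 → z = 0› _ this
    exact sub_eq_zero.1 h7
  have hdet : IsUnit (A * Aᵀ).det := (Matrix.isUnit_iff_isUnit_det _).1 hAAt
  have hQA : A * Q = A := by
    rw [hQdef, ← Matrix.mul_assoc, ← Matrix.mul_assoc, Matrix.mul_nonsing_inv _ hdet,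
      Matrix.one_mul]
    -- ### submodules
  set EU : Submodule ℝ (EuclideanSpace ℝ (Fin n)) :=
    { carrier := {z | A.mulVec z = 0}
      add_mem' := by
        intro a b ha hb
        simp only [Set.mem_setOf_eq] at *
        show A.mulVec ((a : Fin n → ℝ) + (b : Fin n → ℝ)) = 0
        rw [Matrix.mulVec_add, ha, hb, add_zero]
      zero_mem' := by
        show A.mulVec (0 : Fin n → ℝ) = 0
        exact Matrix.mulVec_zero A
      smul_mem' := by
        intro t a ha
        simp only [Set.mem_setOf_eq] at *
        show A.mulVec (t • (a : Fin n → ℝ)) = 0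
        rw [Matrix.mulVec_smul, ha, smul_zero] } with hEUdef
  set EV : Submodule ℝ (EuclideanSpace ℝ (Fin n)) :=
    { carrier := {z | ∀ i, xs i = 0 → z i = 0}
      add_mem' := by
        intro a b ha hb i hi
        show (a : Fin n → ℝ) i + (b : Fin n → ℝ) i = 0
        rw [ha i hi, hb i hi, add_zero]
      zero_mem' := by intro i hi; rfl
      smul_mem' := by
        intro t a ha i hi
        show t * (a : Fin n → ℝ) i = 0
        rw [ha i hi, mul_zero] } with hEVdef
  have hmemEU : ∀ z : EuclideanSpace ℝ (Fin n), z ∈ EU ↔ A.mulVec z = 0 := fun z => Iff.rfl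
  have hmemEV : ∀ z : EuclideanSpace ℝ (Fin n), z ∈ EV ↔ ∀ i, xs i = 0 → z i = 0 :=
    fun z => Iff.rfl
  -- inner products and norms, coordinatewise
  have inner_eq : ∀ x z : EuclideanSpace ℝ (Fin n), ⟪x, z⟫ = ∑ i, x i * z i := by
    intro x z
    rw [PiLp.inner_apply]
    exact Finset.sum_congr rfl fun i _ => by simp [RCLike.inner_apply, mul_comm]
  have norm_sq_eq : ∀ x : EuclideanSpace ℝ (Fin n), ‖x‖ ^ 2 = ∑ i, x i ^ 2 := by
    intro x
    rw [← real_inner_self_eq_norm_sq, inner_eq]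
    exact Finset.sum_congr rfl fun i _ => (sq (x i)).symm
    -- ### identifying the orthogonal projections with the matrices
  have hQmem : ∀ x : EuclideanSpace ℝ (Fin n), mulE Q x ∈ EUᗮ := by
    intro x
    intro u hu
    have hu0 : A.mulVec u = 0 := hu
    rw [inner_eq]
    have e1 : ∑ i, u i * (mulE Q x) i = u ⬝ᵥ (Q.mulVec (WithLp.equiv 2 (Fin n → ℝ) x)) := rfl
    rw [e1, hQdef]
    rw [← Matrix.mulVec_mulVec, ← Matrix.mulVec_mulVec, Matrix.dotProduct_mulVec,
      Matrix.vecMul_transpose, hu0, zero_dotProduct]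
  have hQsub : ∀ x : EuclideanSpace ℝ (Fin n), (x - mulE Q x) ∈ EU := by
    intro x
    show A.mulVec ((WithLp.equiv 2 (Fin n → ℝ)) x
      - Q.mulVec ((WithLp.equiv 2 (Fin n → ℝ)) x)) = 0
    rw [Matrix.mulVec_sub, Matrix.mulVec_mulVec, hQA, sub_self]
  have hPUperp : ∀ x : EuclideanSpace ℝ (Fin n),
      (orthogonalProjection EUᗮ x : EuclideanSpace ℝ (Fin n)) = mulE Q x := by
    intro x
    apply eq_orthogonalProjection_of_mem_orthogonal (hQmem x)
    rw [Submodule.orthogonal_orthogonal]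
    exact hQsub x
  have hPU : ∀ x : EuclideanSpace ℝ (Fin n),
      (orthogonalProjection EU x : EuclideanSpace ℝ (Fin n)) = x - mulE Q x := by
    intro x
    apply eq_orthogonalProjection_of_mem_orthogonal (hQsub x)
    have h9 : x - (x - mulE Q x) = mulE Q x := by abel
    rw [h9]
    exact hQmem x
  have hDgcoord : ∀ (x : EuclideanSpace ℝ (Fin n)) (i : Fin n),
      (mulE Dg x) i = (if xs i = 0 then (1:ℝ) else 0) * x i := by
    intro x i
    show (Dg.mulVec (WithLp.equiv 2 (Fin n → ℝ) x)) i = (if xs i = 0 then (1:ℝ) else 0) * x i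
    rw [hDgdef]
    exact Matrix.mulVec_diagonal _ _ _
  have hDmem : ∀ x : EuclideanSpace ℝ (Fin n), mulE Dg x ∈ EVᗮ := by
    intro x
    intro v hv
    have hv0 : ∀ i, xs i = 0 → v i = 0 := hv
    rw [inner_eq]
    apply Finset.sum_eq_zero
    intro i _
    rw [hDgcoord x i]
    by_cases hi : xs i = 0
    · rw [hv0 i hi, zero_mul]
    · simp [hi]
  have hDsub : ∀ x : EuclideanSpace ℝ (Fin n), (x - mulE Dg x) ∈ EV := by
    intro x
    intro i hi
    show (WithLp.equiv 2 (Fin n → ℝ) x) i - (mulE Dg x) i = 0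
    rw [hDgcoord x i, if_pos hi, one_mul]
    exact sub_self _
  have hPVperp : ∀ x : EuclideanSpace ℝ (Fin n),
      (orthogonalProjection EVᗮ x : EuclideanSpace ℝ (Fin n)) = mulE Dg x := by
    intro x
    apply eq_orthogonalProjection_of_mem_orthogonal (hDmem x)
    rw [Submodule.orthogonal_orthogonal]
    exact hDsub x
  have hPV : ∀ x : EuclideanSpace ℝ (Fin n),
      (orthogonalProjection EV x : EuclideanSpace ℝ (Fin n)) = x - mulE Dg x := by
    intro x
    apply eq_orthogonalProjection_of_mem_orthogonal (hDsub x)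
    have h9 : x - (x - mulE Dg x) = mulE Dg x := by abel
    rw [h9]
    exact hDmem x
  -- ### errMat acts as the abstract operator
  have hT : ∀ x : EuclideanSpace ℝ (Fin n),
      mulE (errMat A xs) x =
        (orthogonalProjection EV (orthogonalProjection EU x) : EuclideanSpace ℝ (Fin n))
        + (orthogonalProjection EVᗮ (orthogonalProjection EUᗮ x) : EuclideanSpace ℝ (Fin n)) := by
    intro x
    rw [hPU x, hPV _, hPUperp x, hPVperp _]
    have hpi : (errMat A xs).mulVec (WithLp.equiv 2 (Fin n → ℝ) x) =
        ((WithLp.equiv 2 (Fin n → ℝ) x) - Q.mulVec (WithLp.equiv 2 (Fin n → ℝ) x))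
          - Dg.mulVec ((WithLp.equiv 2 (Fin n → ℝ) x) - Q.mulVec (WithLp.equiv 2 (Fin n → ℝ) x))
          + Dg.mulVec (Q.mulVec (WithLp.equiv 2 (Fin n → ℝ) x)) := by
      rw [errMat, ← hQdef, ← hDgdef]
      rw [Matrix.add_mulVec, ← Matrix.mulVec_mulVec, ← Matrix.mulVec_mulVec,
        Matrix.sub_mulVec, Matrix.sub_mulVec, Matrix.one_mulVec, Matrix.one_mulVec]
    exact congrArg (WithLp.equiv 2 (Fin n → ℝ)).symm hpi
    -- ### properties of c
  obtain ⟨u0, v0, hu0A, hv0z, hu01, hv01, hc0val⟩ := hc.1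
  have hc0 : 0 ≤ c := by
    have hmem : -c ∈ {t : ℝ | ∃ u v : Fin n → ℝ, A.mulVec u = 0 ∧
        (∀ i, xs i = 0 → v i = 0) ∧ (∑ i, u i ^ 2) = 1 ∧ (∑ i, v i ^ 2) = 1 ∧
        t = ∑ i, u i * v i} := by
      refine ⟨u0, -v0, hu0A, ?_, hu01, ?_, ?_⟩
      · intro i hi; rw [Pi.neg_apply, hv0z i hi, neg_zero]
      · calc ∑ i, (-v0) i ^ 2 = ∑ i, v0 i ^ 2 :=
              Finset.sum_congr rfl fun i _ => by rw [Pi.neg_apply]; ring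
          _ = 1 := hv01
      · rw [hc0val, ← Finset.sum_neg_distrib]
        exact Finset.sum_congr rfl fun i _ => by rw [Pi.neg_apply]; ring
    have := hc.2 hmem
    linarith
  have hcle1 : c ≤ 1 := by
    have h3 : (0:ℝ) ≤ ∑ i, (u0 i - v0 i) ^ 2 := Finset.sum_nonneg fun i _ => sq_nonneg _
    have h4 : ∑ i, (u0 i - v0 i) ^ 2 = 2 - 2 * c := by
      have h5 : ∀ i ∈ Finset.univ, (u0 i - v0 i) ^ 2
          = u0 i ^ 2 + v0 i ^ 2 - 2 * (u0 i * v0 i) := fun i _ => by ring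
      rw [Finset.sum_congr rfl h5, Finset.sum_sub_distrib, Finset.sum_add_distrib,
        ← Finset.mul_sum, hu01, hv01, ← hc0val]
      norm_num
    linarith
  -- ### U ∩ V = ⊥
  have hUVbot : EU ⊓ EV = ⊥ := by
    rw [Submodule.eq_bot_iff]
    rintro z ⟨hz1, hz2⟩
    exact WithLp.ofLp_injective 2 (htriv z hz1 hz2)
  -- ### the angle bound in inner-product form
  have hub : ∀ u ∈ EU, ∀ v ∈ EV, ⟪u, v⟫ ≤ c * (‖u‖ * ‖v‖) := by
    intro u hu v hv
    rw [inner_eq]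
    by_cases hu0 : u = 0
    · have : ∀ i, u i = 0 := fun i => by rw [hu0]; rfl
      have hz : ∑ i, u i * v i = 0 := Finset.sum_eq_zero fun i _ => by rw [this i, zero_mul]
      rw [hz]
      positivity
    by_cases hv0 : v = 0
    · have : ∀ i, v i = 0 := fun i => by rw [hv0]; rfl
      have hz : ∑ i, u i * v i = 0 := Finset.sum_eq_zero fun i _ => by rw [this i, mul_zero]
      rw [hz]
      positivity
    have hnu : 0 < ‖u‖ := norm_pos_iff.2 hu0
    have hnv : 0 < ‖v‖ := norm_pos_iff.2 hv0
    set u' : Fin n → ℝ := ‖u‖⁻¹ • (WithLp.equiv 2 (Fin n → ℝ) u) with hu'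
    set v' : Fin n → ℝ := ‖v‖⁻¹ • (WithLp.equiv 2 (Fin n → ℝ) v) with hv'
    have hu'c : ∀ i, u' i = ‖u‖⁻¹ * u i := fun i => rfl
    have hv'c : ∀ i, v' i = ‖v‖⁻¹ * v i := fun i => rfl
    have husum : ∑ i, u i ^ 2 = ‖u‖ ^ 2 := (norm_sq_eq u).symm
    have hvsum : ∑ i, v i ^ 2 = ‖v‖ ^ 2 := (norm_sq_eq v).symm
    have hmem : (‖u‖⁻¹ * ‖v‖⁻¹) * (∑ i, u i * v i) ∈ {t : ℝ | ∃ u v : Fin n → ℝ,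
        A.mulVec u = 0 ∧ (∀ i, xs i = 0 → v i = 0) ∧ (∑ i, u i ^ 2) = 1 ∧
        (∑ i, v i ^ 2) = 1 ∧ t = ∑ i, u i * v i} := by
      refine ⟨u', v', ?_, ?_, ?_, ?_, ?_⟩
      · have huA : A.mulVec (WithLp.equiv 2 (Fin n → ℝ) u) = 0 := hu
        rw [hu', Matrix.mulVec_smul, huA, smul_zero]
      · intro i hi
        have : v i = 0 := hv i hi
        rw [hv'c i, this, mul_zero]
      · calc ∑ i, u' i ^ 2 = ∑ i, ‖u‖⁻¹ ^ 2 * u i ^ 2 :=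
              Finset.sum_congr rfl fun i _ => by rw [hu'c i]; ring
          _ = ‖u‖⁻¹ ^ 2 * ∑ i, u i ^ 2 := by rw [Finset.mul_sum]
          _ = 1 := by rw [husum]; field_simp
      · calc ∑ i, v' i ^ 2 = ∑ i, ‖v‖⁻¹ ^ 2 * v i ^ 2 :=
              Finset.sum_congr rfl fun i _ => by rw [hv'c i]; ring
          _ = ‖v‖⁻¹ ^ 2 * ∑ i, v i ^ 2 := by rw [Finset.mul_sum]
          _ = 1 := by rw [hvsum]; field_simp
      · calc (‖u‖⁻¹ * ‖v‖⁻¹) * (∑ i, u i * v i)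
            = ∑ i, (‖u‖⁻¹ * ‖v‖⁻¹) * (u i * v i) := by rw [Finset.mul_sum]
          _ = ∑ i, u' i * v' i :=
              Finset.sum_congr rfl fun i _ => by rw [hu'c i, hv'c i]; ring
    have ht := hc.2 hmem
    have hmul := mul_le_mul_of_nonneg_left ht (le_of_lt (mul_pos hnu hnv))
    have key : (‖u‖ * ‖v‖) * ((‖u‖⁻¹ * ‖v‖⁻¹) * (∑ i, u i * v i)) = ∑ i, u i * v i := by
      field_simp
    rw [key] at hmul
    calc ∑ i, u i * v i ≤ (‖u‖ * ‖v‖) * c := hmul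
      _ = c * (‖u‖ * ‖v‖) := by ring
  have hub' : ∀ v ∈ EV, ∀ u ∈ EU, ⟪v, u⟫ ≤ c * (‖v‖ * ‖u‖) := by
    intro v hv u hu
    have h1 := hub u hu v hv
    rw [inner_eq] at h1 ⊢
    have hsw : ∑ i, v i * u i = ∑ i, u i * v i :=
      Finset.sum_congr rfl fun i _ => mul_comm _ _
    rw [hsw]
    calc ∑ i, u i * v i ≤ c * (‖u‖ * ‖v‖) := h1
      _ = c * (‖v‖ * ‖u‖) := by ring
    -- ### the error sequence
  set e : ℕ → EuclideanSpace ℝ (Fin n) :=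
    fun k => (WithLp.equiv 2 (Fin n → ℝ)).symm (y k - ys) with he
  have heiter : ∀ k, K ≤ k → e (k + 1) = mulE (errMat A xs) (e k) := by
    intro k hk
    exact congrArg (WithLp.equiv 2 (Fin n → ℝ)).symm (hiter k hk)
  -- ### e K is orthogonal to W = EUᗮ ⊓ EVᗮ
  have heK : e K ∈ (EUᗮ ⊓ EVᗮ)ᗮ := by
    intro z hz
    obtain ⟨hzU, hzV⟩ := hz
    have hz1 : (orthogonalProjection EUᗮ z : EuclideanSpace ℝ (Fin n)) = z :=
      orthogonalProjection_eq_self_iff.2 hzU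
    have hz2 : z = mulE Q z := by rw [← hPUperp z, hz1]
    have hz2' : (WithLp.equiv 2 (Fin n → ℝ)) z
        = Q.mulVec ((WithLp.equiv 2 (Fin n → ℝ)) z) :=
      congrArg (WithLp.equiv 2 (Fin n → ℝ)) hz2
    have hz3 : (WithLp.equiv 2 (Fin n → ℝ)) z
        = Aᵀ.mulVec ((((A * Aᵀ)⁻¹) * A).mulVec ((WithLp.equiv 2 (Fin n → ℝ)) z)) := by
      rw [Matrix.mulVec_mulVec, ← Matrix.mul_assoc, ← hQdef, ← hz2']
    have hzero : ∀ i, xs i ≠ 0 → (WithLp.equiv 2 (Fin n → ℝ)) z i = 0 := by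
      intro i hi
      have hsing : (EuclideanSpace.single i (1:ℝ)) ∈ EV := by
        intro j hj
        have hij : j ≠ i := fun h => hi (h ▸ hj)
        rw [EuclideanSpace.single_apply, if_neg hij]
      have h0 := (Submodule.mem_orthogonal _ _).1 hzV _ hsing
      rw [inner_eq] at h0
      have h1 : ∑ j, (EuclideanSpace.single i (1:ℝ)) j * z j = z i := by
        rw [Finset.sum_eq_single i]
        · rw [EuclideanSpace.single_apply, if_pos rfl, one_mul]
        · intro j _ hji
          rw [EuclideanSpace.single_apply, if_neg hji, zero_mul]
        · intro hmem
          exact absurd (Finset.mem_univ i) hmem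
      rw [h1] at h0
      exact h0
    have hsum := hproj ((WithLp.equiv 2 (Fin n → ℝ)) z) ⟨_, hz3⟩ hzero
    rw [inner_eq]
    calc ∑ i, z i * e K i = ∑ i, (y K i - ys i) * ((WithLp.equiv 2 (Fin n → ℝ)) z) i :=
          Finset.sum_congr rfl fun i _ => mul_comm _ _
      _ = 0 := hsum
  -- ### the induction
  have main : ∀ j : ℕ, e (K + j) ∈ (EUᗮ ⊓ EVᗮ)ᗮ ∧ ‖e (K + j)‖ ≤ c ^ j * ‖e K‖ := by
    intro j
    induction j with
    | zero => exact ⟨heK, by simp⟩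
    | succ j ih =>
      have hk : K ≤ K + j := Nat.le_add_right _ _
      have hstep := stepBound (U := EU) (V := EV) hc0 hcle1 hUVbot hub hub' ih.1
      have he1 : e (K + (j + 1)) = mulE (errMat A xs) (e (K + j)) := heiter (K + j) hk
      rw [he1, hT (e (K + j))]
      refine ⟨hstep.2, ?_⟩
      calc ‖(orthogonalProjection EV (orthogonalProjection EU (e (K+j))) : EuclideanSpace ℝ (Fin n))
            + (orthogonalProjection EVᗮ (orthogonalProjection EUᗮ (e (K+j))) : EuclideanSpace ℝ (Fin n))‖
          ≤ c * ‖e (K + j)‖ := hstep.1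
        _ ≤ c * (c ^ j * ‖e K‖) := mul_le_mul_of_nonneg_left ih.2 hc0
        _ = c ^ (j + 1) * ‖e K‖ := by ring
  -- ### conclusion
  intro k hK
  have hk : k = K + (k - K) := by omega
  have hfin := (main (k - K)).2
  rw [← hk] at hfin
  have h1 : Real.sqrt (∑ i, (y k i - ys i) ^ 2) = ‖e k‖ := by
    have h2 : (∑ i, (y k i - ys i) ^ 2) = ‖e k‖ ^ 2 := (norm_sq_eq (e k)).symm
    rw [h2, Real.sqrt_sq (norm_nonneg _)]
  have h1K : Real.sqrt (∑ i, (y K i - ys i) ^ 2) = ‖e K‖ := by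
    have h2 : (∑ i, (y K i - ys i) ^ 2) = ‖e K‖ ^ 2 := (norm_sq_eq (e K)).symm
    rw [h2, Real.sqrt_sq (norm_nonneg _)]
  rw [h1, h1K]
  exact hfin
end

section
/- The proximal operator of h(x) = ι_{\{x : Ax = b\}}(x) + (1/(2α))||x||² with parameter γ is J_{γ∂h}(x) = (α/(α+γ)) x + A^+(b - (α/(α+γ)) Ax). -/
open Finset Matrix

lemma aux_isUnit {m : ℕ} (B : Matrix (Fin m) (Fin m) ℝ) (h : B.rank = m) :
    IsUnit B := by
  rw [← Matrix.mulVec_surjective_iff_isUnit]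
  have : LinearMap.range B.mulVecLin = ⊤ := by
    apply Submodule.eq_top_of_finrank_eq
    rw [← Matrix.rank, h]
    simp [Module.finrank_fintype_fun_eq_card]
  exact LinearMap.range_eq_top.mp this

lemma aux_sq_expand {n : ℕ} (u v : Fin n → ℝ) :
    (u + v) ⬝ᵥ (u + v) = u ⬝ᵥ u + 2 * (v ⬝ᵥ u) + v ⬝ᵥ v := by
  rw [add_dotProduct, dotProduct_add, dotProduct_add, dotProduct_comm u v]
  ring

lemma aux_sum_sq {n : ℕ} (v : Fin n → ℝ) : ∑ i, v i ^ 2 = v ⬝ᵥ v := by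
  simp [dotProduct, sq]

/-- The proximal operator of `h(x) = ι_{Ax=b}(x) + ‖x‖²/(2α)` with parameter `γ`
is `J(x) = (α/(α+γ))x + A⁺(b - (α/(α+γ))Ax)`: it is the unique minimizer of
`z ↦ (γ/(2α))‖z‖² + ½‖z - x‖²` over `{z : Az = b}`. -/
theorem stmt14 {m n : ℕ} (A : Matrix (Fin m) (Fin n) ℝ) (b : Fin m → ℝ)
    (hrank : A.rank = m) (α γ : ℝ) (hα : 0 < α) (hγ : 0 < γ) (x : Fin n → ℝ) :
    A.mulVec ((α / (α + γ)) • x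
        + (Aᵀ * (A * Aᵀ)⁻¹).mulVec (b - (α / (α + γ)) • A.mulVec x)) = b ∧
    (∀ z : Fin n → ℝ, A.mulVec z = b →
      z ≠ (α / (α + γ)) • x
        + (Aᵀ * (A * Aᵀ)⁻¹).mulVec (b - (α / (α + γ)) • A.mulVec x) →
      (γ / (2 * α)) * (∑ i, ((α / (α + γ)) • x
          + (Aᵀ * (A * Aᵀ)⁻¹).mulVec (b - (α / (α + γ)) • A.mulVec x)) i ^ 2)
        + (1/2) * (∑ i, (((α / (α + γ)) • x
          + (Aᵀ * (A * Aᵀ)⁻¹).mulVec (b - (α / (α + γ)) • A.mulVec x)) i - x i) ^ 2)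
      < (γ / (2 * α)) * (∑ i, (z i) ^ 2) + (1/2) * (∑ i, (z i - x i) ^ 2)) := by
  have hαγ : α + γ ≠ 0 := by positivity
  set c : ℝ := α / (α + γ) with hc
  set w : Fin m → ℝ := b - c • A.mulVec x with hw
  set zs : Fin n → ℝ := c • x + (Aᵀ * (A * Aᵀ)⁻¹).mulVec w with hzs
  have hunit : IsUnit (A * Aᵀ) := by
    apply aux_isUnit
    rw [Matrix.rank_self_mul_transpose, hrank]
  have hdet : IsUnit (A * Aᵀ).det := (Matrix.isUnit_iff_isUnit_det _).mp hunit
  have hAzs : A.mulVec zs = b := by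
    rw [hzs, Matrix.mulVec_add, Matrix.mulVec_mulVec, ← Matrix.mul_assoc,
      Matrix.mul_nonsing_inv _ hdet, Matrix.one_mulVec, Matrix.mulVec_smul, hw]
    simp
  refine ⟨hAzs, fun z hz hne => ?_⟩
  set d : Fin n → ℝ := z - zs with hd
  have hzd : z = zs + d := by rw [hd]; abel
  have hAd : A.mulVec d = 0 := by
    rw [hd, Matrix.mulVec_sub, hz, hAzs, sub_self]
  have hdzs : d ⬝ᵥ zs = c * (d ⬝ᵥ x) := by
    rw [hzs, dotProduct_add, dotProduct_smul, ← Matrix.mulVec_mulVec,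
      Matrix.dotProduct_mulVec, Matrix.vecMul_transpose, hAd]
    simp
  have hdd : (0:ℝ) < d ⬝ᵥ d := by
    have hnn : (0:ℝ) ≤ d ⬝ᵥ d := Finset.sum_nonneg fun i _ => mul_self_nonneg _
    rcases lt_or_eq_of_le hnn with h | h
    · exact h
    · exfalso
      apply hne
      have hd0 : d = 0 := (dotProduct_self_eq_zero (v := d)).mp h.symm
      rw [hzd, hd0, add_zero]
  rw [aux_sum_sq z, aux_sum_sq]
  have hsz : (fun i => z i - x i) = z - x := rfl
  have h1 : ∑ i, (z i - x i) ^ 2 = (z - x) ⬝ᵥ (z - x) := by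
    rw [← aux_sum_sq (z - x)]; simp
  have h2 : ∑ i, (zs i - x i) ^ 2 = (zs - x) ⬝ᵥ (zs - x) := by
    rw [← aux_sum_sq (zs - x)]; simp
  rw [h1, h2]
  have e1 : z ⬝ᵥ z = zs ⬝ᵥ zs + 2 * (d ⬝ᵥ zs) + d ⬝ᵥ d := by
    rw [hzd]; exact aux_sq_expand zs d
  have e2 : (z - x) ⬝ᵥ (z - x)
      = (zs - x) ⬝ᵥ (zs - x) + 2 * (d ⬝ᵥ (zs - x)) + d ⬝ᵥ d := by
    have : z - x = (zs - x) + d := by rw [hzd]; abel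
    rw [this]; exact aux_sq_expand (zs - x) d
  have e3 : d ⬝ᵥ (zs - x) = c * (d ⬝ᵥ x) - d ⬝ᵥ x := by
    rw [dotProduct_sub, hdzs]
  rw [e1, e2, e3, hdzs]
  have hcoef : γ / (2 * α) * (2 * (c * (d ⬝ᵥ x)))
      + 1/2 * (2 * (c * (d ⬝ᵥ x) - d ⬝ᵥ x)) = 0 := by
    rw [hc]; field_simp; ring
  have hpos : 0 < (γ / (2 * α)) * (d ⬝ᵥ d) + 1/2 * (d ⬝ᵥ d) := by positivity
  nlinarith [hpos, hcoef]
end
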